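/- arXiv:2401.07025 — 3 statements merged into one kernel-verified Lean document; each statement's English description precedes it below -/
import Mathlib

section
/- Let μ be a Keisler measure over a small model M. Then μ extends to a global M-definable Keisler measure if and only if μ has a unique global heir over M. -/
namespace KeislerPaper

open FirstOrder FirstOrder.Language Set MeasureTheory
open scoped ENNReal Classical

universe u v

/-! ### Finitely additive probability measures on a distinguished collection of sets.

A Keisler measure over a parameter set `A` is represented as a real-valued set-function
which is a finitely additive probability measure on the collection of `A`-definable sets
(its values outside the distinguished collection are irrelevant, and all notions below
only refer to values on the relevant collections). -/

structure FAM (X : Type u) (D : Set (Set X)) : Type u where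
  val : Set X → ℝ
  nonneg : ∀ s ∈ D, 0 ≤ val s
  isProb : val Set.univ = 1
  additive : ∀ s t : Set X, s ∈ D → t ∈ D → Disjoint s t → val (s ∪ t) = val s + val t

/-- Two set-functions agree on a collection of sets. -/
def agreeOn {X : Type u} (D : Set (Set X)) (f g : Set X → ℝ) : Prop :=
  ∀ s ∈ D, f s = g s

/-- A measure is (the measure associated to) a type when it is `0-1`-valued. -/
def IsTypeOn {X : Type u} (D : Set (Set X)) (f : Set X → ℝ) : Prop :=
  ∀ s ∈ D, f s = 0 ∨ f s = 1

/-- The `D₀`-restriction of `f` has a unique extension to a finitely additive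
probability measure on the collection `D₁`: this is smoothness of the restriction of `f`
to `D₀` relative to `D₁`. -/
def SmoothOn {X : Type u} (D₀ D₁ : Set (Set X)) (f : Set X → ℝ) : Prop :=
  (∃ ν : FAM X D₁, agreeOn D₀ ν.val f) ∧
    ∀ ν₁ ν₂ : FAM X D₁, agreeOn D₀ ν₁.val f → agreeOn D₀ ν₂.val f →
      agreeOn D₁ ν₁.val ν₂.val

/-- The Dirac measure at a point (the measure associated to a realized type). -/
noncomputable def diracF {X : Type u} (D : Set (Set X)) (x : X) : FAM X D where
  val s := if x ∈ s then 1 else 0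
  nonneg s _ := by by_cases h : x ∈ s <;> simp [h]
  isProb := by simp
  additive s t _ _ hd := by
    by_cases hs : x ∈ s
    · have ht : x ∉ t := fun ht => Set.disjoint_left.mp hd hs ht
      simp [Set.mem_union, hs, ht]
    · by_cases ht : x ∈ t <;> simp [Set.mem_union, hs, ht]

/-- Convex combination `t·μ + (1-t)·ν` of two finitely additive measures. -/
noncomputable def FAM.mix {X : Type u} {D : Set (Set X)} (t : ℝ) (h0 : 0 ≤ t) (h1 : t ≤ 1)
    (μ ν : FAM X D) : FAM X D where
  val s := t * μ.val s + (1 - t) * ν.val s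
  nonneg s hs := add_nonneg (mul_nonneg h0 (μ.nonneg s hs))
    (mul_nonneg (by linarith) (ν.nonneg s hs))
  isProb := by
    show t * μ.val Set.univ + (1 - t) * ν.val Set.univ = 1
    rw [μ.isProb, ν.isProb]; ring
  additive s s' hs hs' hd := by
    show t * μ.val (s ∪ s') + (1 - t) * ν.val (s ∪ s') =
      t * μ.val s + (1 - t) * ν.val s + (t * μ.val s' + (1 - t) * ν.val s')
    rw [μ.additive s s' hs hs' hd, ν.additive s s' hs hs' hd]; ring

/-! ### Keisler measures -/

/-- The collection of `A`-definable subsets of `α → U`. -/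
def Dset (L : FirstOrder.Language.{u, u}) {U : Type u} [L.Structure U] (A : Set U)
    (α : Type u) : Set (Set (α → U)) :=
  {s | A.Definable L s}

/-- A Keisler measure over the parameter set `A`, in the variable(s) `α`:
a finitely additive probability measure on the Boolean algebra of `A`-definable sets. -/
abbrev KMeasure (L : FirstOrder.Language.{u, u}) {U : Type u} [L.Structure U] (A : Set U)
    (α : Type u) : Type u :=
  FAM (α → U) (Dset L A α)

/-- The set `φ(U; b)` defined by a formula `φ(x; y)` with the parameters `b`. -/
def defFam {U : Type u} {L' : FirstOrder.Language.{u, u}} [L'.Structure U] {α : Type u}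
    {m : ℕ} (φ : L'.Formula (α ⊕ Fin m)) (b : Fin m → U) : Set (α → U) :=
  {a | φ.Realize (Sum.elim a b)}

/-- `b ≡_A b'` : the tuples `b` and `b'` have the same type over `A`. -/
def SameTypeOver (L : FirstOrder.Language.{u, u}) {U : Type u} [L.Structure U] (A : Set U)
    {m : ℕ} (b b' : Fin m → U) : Prop :=
  ∀ φ : (L[[A]]).Formula (Fin m), φ.Realize b ↔ φ.Realize b'

/-- `f` (the values of a global Keisler measure) is invariant over `Mset`. -/
def InvariantOn (L : FirstOrder.Language.{u, u}) {U : Type u} [L.Structure U] {α : Type u}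
    (f : Set (α → U) → ℝ) (Mset : Set U) : Prop :=
  ∀ (m : ℕ) (φ : (L[[Mset]]).Formula (α ⊕ Fin m)) (b b' : Fin m → U),
    SameTypeOver L Mset b b' → f (defFam φ b) = f (defFam φ b')

/-- A measure (given by its values `f` on the collection `D`) is finitely satisfiable in
`Mset`: every set in `D` of positive measure contains a tuple from `Mset`. -/
def FinSatIn {U : Type u} {α : Type u} (D : Set (Set (α → U))) (f : Set (α → U) → ℝ)
    (Mset : Set U) : Prop :=
  ∀ s ∈ D, 0 < f s → ∃ a ∈ s, ∀ i, a i ∈ Mset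

/-- A global Keisler measure (given by its values `f`) is definable over `Mset`:
it is `Mset`-invariant and for every formula `φ(x;y)` the induced map on `S_y(Mset)` is
continuous, i.e. the sets `{b : μ(φ(x;b)) < r}` and `{b : μ(φ(x;b)) > r}` are open in the
`Mset`-logic topology. -/
def DefinableOver (L : FirstOrder.Language.{u, u}) {U : Type u} [L.Structure U] {α : Type u}
    (f : Set (α → U) → ℝ) (Mset : Set U) : Prop :=
  InvariantOn L f Mset ∧
    ∀ (m : ℕ) (φ : L.Formula (α ⊕ Fin m)) (r : ℝ),
      (∀ b : Fin m → U, f (defFam φ b) < r →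
        ∃ ψ : (L[[Mset]]).Formula (Fin m), ψ.Realize b ∧
          ∀ b' : Fin m → U, ψ.Realize b' → f (defFam φ b') < r) ∧
      (∀ b : Fin m → U, r < f (defFam φ b) →
        ∃ ψ : (L[[Mset]]).Formula (Fin m), ψ.Realize b ∧
          ∀ b' : Fin m → U, ψ.Realize b' → r < f (defFam φ b'))

/-! ### NIP -/

/-- A formula `φ(x; y)` has the independence property (in `U`). -/
def HasIP {L : FirstOrder.Language.{u, u}} (U : Type u) [L.Structure U] {α : Type u}
    {β : Type v} (φ : L.Formula (α ⊕ β)) : Prop :=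
  ∃ (a : ℕ → α → U) (c : Set ℕ → β → U),
    ∀ (i : ℕ) (S : Set ℕ), φ.Realize (Sum.elim (a i) (c S)) ↔ i ∈ S

/-- The (complete theory of the) structure `U` is NIP: no formula has the independence
property. -/
def TheoryNIP (L : FirstOrder.Language.{u, u}) (U : Type u) [L.Structure U] : Prop :=
  ∀ (α β : Type u) (φ : L.Formula (α ⊕ β)), ¬ HasIP U φ

/-! ### Models, saturation, monster model -/

/-- `S` is (the underlying set of) an elementary submodel of `U`, via the Tarski–Vaught
criterion. -/
def IsElemSubset (L' : FirstOrder.Language.{u, u}) (U : Type u) [L'.Structure U]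
    (S : Set U) : Prop :=
  S.Nonempty ∧
    ∀ (m : ℕ) (φ : L'.Formula (Fin m ⊕ Fin 1)) (b : Fin m → U), (∀ i, b i ∈ S) →
      (∃ a : Fin 1 → U, φ.Realize (Sum.elim b a)) →
      ∃ a : Fin 1 → U, (∀ i, a i ∈ S) ∧ φ.Realize (Sum.elim b a)

/-- The submodel (with underlying set) `S` of `U` is `κ`-saturated: every type over a
subset `A ⊆ S` with `|A| < κ` which is finitely satisfiable in `S` is realized in `S`. -/
def SaturatedIn (L' : FirstOrder.Language.{u, u}) (U : Type u) [L'.Structure U] (S : Set U)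
    (κ : Cardinal.{u}) : Prop :=
  ∀ A : Set U, A ⊆ S → Cardinal.mk A < κ →
    ∀ Φ : Set ((L'[[A]]).Formula (Fin 1)),
      (∀ Φ₀ : Finset ((L'[[A]]).Formula (Fin 1)), ↑Φ₀ ⊆ Φ →
        ∃ b : Fin 1 → U, (∀ i, b i ∈ S) ∧ ∀ φ ∈ Φ₀, Formula.Realize φ b) →
      ∃ b : Fin 1 → U, (∀ i, b i ∈ S) ∧ ∀ φ ∈ Φ, Formula.Realize φ b

/-- `A` is small with respect to the degree of saturation `κ` of the monster model. -/
def SmallSet (L : FirstOrder.Language.{u, u}) {U : Type u} (κ : Cardinal.{u}) (A : Set U) :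
    Prop :=
  Cardinal.mk A + L.card + Cardinal.aleph0 < κ

/-- `Mset ≺⁺ Nset` : `Nset` is a `(|Mset| + |T|)⁺`-saturated elementary extension. -/
def PlusExt (L' : FirstOrder.Language.{u, u}) (U : Type u) [L'.Structure U]
    (Mset Nset : Set U) : Prop :=
  Mset ⊆ Nset ∧ IsElemSubset L' U Nset ∧
    SaturatedIn L' U Nset (Order.succ (Cardinal.mk Mset + L'.card + Cardinal.aleph0))

/-- `U` is a monster model of degree `κ`: it is `κ`-saturated and strongly
`κ`-homogeneous. -/
def IsMonster (L : FirstOrder.Language.{u, u}) (U : Type u) [L.Structure U]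
    (κ : Cardinal.{u}) : Prop :=
  (∀ A : Set U, Cardinal.mk A < κ →
    ∀ Φ : Set ((L[[A]]).Formula (Fin 1)),
      (∀ Φ₀ : Finset ((L[[A]]).Formula (Fin 1)), ↑Φ₀ ⊆ Φ →
        ∃ b : Fin 1 → U, ∀ φ ∈ Φ₀, Formula.Realize φ b) →
      ∃ b : Fin 1 → U, ∀ φ ∈ Φ, Formula.Realize φ b) ∧
  ∀ (β : Type u), Cardinal.mk β < κ → ∀ a a' : β → U,
    (∀ φ : L.Formula β, φ.Realize a ↔ φ.Realize a') →
    ∃ σ : U ≃[L] U, ∀ i, σ (a i) = a' i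

/-! ### Heirs -/

/-- `f` (the values of a measure over `Bset ⊇ Mset`) is an heir over `Mset`. -/
def IsHeir (L : FirstOrder.Language.{u, u}) {U : Type u} [L.Structure U] {α : Type u}
    (f : Set (α → U) → ℝ) (Mset Bset : Set U) : Prop :=
  ∀ ε : ℝ, 0 < ε → ∀ (n m : ℕ) (φ : Fin n → (L[[Mset]]).Formula (α ⊕ Fin m))
    (b : Fin m → U), (∀ j, b j ∈ Bset) →
    ∃ d : Fin m → U, (∀ j, d j ∈ Mset) ∧
      ∀ i : Fin n, |f (defFam (φ i) b) - f (defFam (φ i) d)| < ε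

/-! ### Amalgams and products -/

/-- The cylinder over the first block of variables. -/
def cylL {U : Type u} {α : Type u} (β : Type u) (s : Set (α → U)) : Set ((α ⊕ β) → U) :=
  {h | (fun a => h (Sum.inl a)) ∈ s}

/-- The cylinder over the second block of variables. -/
def cylR {U : Type u} (α : Type u) {β : Type u} (t : Set (β → U)) : Set ((α ⊕ β) → U) :=
  {h | (fun b => h (Sum.inr b)) ∈ t}

/-- `w` (the values of a measure in the variables `x y`) is a separated amalgam over `A` of
`f` (in variable `x`) and `g` (in variable `y`): `w(φ(x) ∧ ψ(y)) = f(φ(x))·g(ψ(y))`. -/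
def SepAmalgamOn (L : FirstOrder.Language.{u, u}) {U : Type u} [L.Structure U]
    {α β : Type u} (A : Set U) (w : Set ((α ⊕ β) → U) → ℝ) (f : Set (α → U) → ℝ)
    (g : Set (β → U) → ℝ) : Prop :=
  ∀ (s : Set (α → U)) (t : Set (β → U)), A.Definable L s → A.Definable L t →
    w (cylL β s ∩ cylR α t) = f s * g t

/-! ### The product of invariant measures (via integration on the type space).

For a global measure `ν` and a small model `N`, the regular Borel extension of `ν|N` to
the type space `S_y(N)` is encoded by the Carathéodory outer measure generated by `ν` on
the `N`-definable sets, and integrals against it are defined by the layer-cake formula. -/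

/-- The outer measure on `β → U` generated by the values `νv` on `Nset`-definable sets. -/
noncomputable def outerOf (L : FirstOrder.Language.{u, u}) {U : Type u} [L.Structure U]
    {β : Type u} (νv : Set (β → U) → ℝ) (Nset : Set U) : Set (β → U) → ℝ≥0∞ := fun E =>
  ⨅ (D : ℕ → Set (β → U)) (_ : ∀ n, Nset.Definable L (D n)) (_ : E ⊆ ⋃ n, D n),
    ∑' n, ENNReal.ofReal (νv (D n))

/-- The integral `∫_{S_y(N)} f dν`, via the layer-cake formula. -/
noncomputable def ointegral (L : FirstOrder.Language.{u, u}) {U : Type u} [L.Structure U]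
    {β : Type u} (νv : Set (β → U) → ℝ) (Nset : Set U) (f : (β → U) → ℝ) : ℝ :=
  (∫⁻ t in Set.Ioi (0 : ℝ), outerOf L νv Nset {b | t < f b}).toReal

/-- `ω = μ(x) ⊗ ν(y)` : for every set `s` definable over a small model `Nset ⊇ Mset`,
`ω(s) = ∫ μ(s_b) dν(b)`, the integral over `S_y(Nset)` of the `μ`-measures of the fibers.
(Here `μ` is the `Mset`-invariant factor.) -/
def IsTensorL (L : FirstOrder.Language.{u, u}) {U : Type u} [L.Structure U] {α β : Type u}
    (Mset : Set U) (κ : Cardinal.{u}) (μ : KMeasure L (Set.univ : Set U) α)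
    (ν : KMeasure L (Set.univ : Set U) β) (ω : KMeasure L (Set.univ : Set U) (α ⊕ β)) :
    Prop :=
  ∀ (s : Set ((α ⊕ β) → U)) (Nset : Set U), IsElemSubset L U Nset → Mset ⊆ Nset →
    SmallSet L κ Nset → Nset.Definable L s →
    ω.val s = ointegral L ν.val Nset fun b => μ.val {a | Sum.elim a b ∈ s}

/-- `ω = ν(y) ⊗ μ(x)` where `ω` is a measure in the variables `(x, y)` (the first
block of variables is that of `μ`, the second that of the `Mset`-invariant factor `ν`). -/
def IsTensorR (L : FirstOrder.Language.{u, u}) {U : Type u} [L.Structure U] {α β : Type u}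
    (Mset : Set U) (κ : Cardinal.{u}) (ν : KMeasure L (Set.univ : Set U) β)
    (μ : KMeasure L (Set.univ : Set U) α) (ω : KMeasure L (Set.univ : Set U) (α ⊕ β)) :
    Prop :=
  ∀ (s : Set ((α ⊕ β) → U)) (Nset : Set U), IsElemSubset L U Nset → Mset ⊆ Nset →
    SmallSet L κ Nset → Nset.Definable L s →
    ω.val s = ointegral L μ.val Nset fun a => ν.val {b | Sum.elim a b ∈ s}

/-! ### Pairs of models: the language `L_P = L ∪ {P}` -/

/-- The language with a single unary predicate `P`. -/
def pLang : FirstOrder.Language.{u, u} where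
  Functions := fun _ => PEmpty
  Relations := fun n =>
    match n with
    | 1 => PUnit
    | _ => PEmpty

/-- The `pLang`-structure on `U` in which `P` is interpreted by the subset `PU`. -/
def pStruct {U : Type u} (PU : Set U) : pLang.{u}.Structure U where
  funMap := fun f _ => PEmpty.elim f
  RelMap := fun {n} r x =>
    match n, r, x with
    | 1, _, x => x 0 ∈ PU
    | 0, r, _ => PEmpty.elim r
    | _ + 2, r, _ => PEmpty.elim r

/-- The language `L_P`, obtained from `L` by adding a new unary predicate `P`. -/
def LP (L : FirstOrder.Language.{u, u}) : FirstOrder.Language.{u, u} :=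
  L.sum pLang

/-- The `L_P`-structure `(U, PU)` on `U`, where `P` is interpreted by `PU`. -/
def pairStr (L : FirstOrder.Language.{u, u}) {U : Type u} [L.Structure U] (PU : Set U) :
    (LP L).Structure U :=
  letI : pLang.{u}.Structure U := pStruct PU
  FirstOrder.Language.sumStructure L pLang U

/-- `S` is an elementary submodel of the pair `(U, PU)` in the language `L_P`. -/
def PIsElemSubset (L : FirstOrder.Language.{u, u}) {U : Type u} [L.Structure U]
    (PU S : Set U) : Prop :=
  @IsElemSubset (LP L) U (pairStr L PU) S

/-- The pair `Mset ≺⁺ Nset` inside `(U, PU)`, in the language `L_P`. -/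
def PairPlusExt (L : FirstOrder.Language.{u, u}) {U : Type u} [L.Structure U]
    (PU Mset Nset : Set U) : Prop :=
  @PlusExt (LP L) U (pairStr L PU) Mset Nset

/-- `P(x)` : the set of tuples all of whose coordinates satisfy the predicate `P`. -/
def PSetC {U : Type u} (PU : Set U) (α : Type u) : Set (α → U) :=
  {a | ∀ i, a i ∈ PU}

/-- The collection of `Δ(A)`-definable sets, where `Δ` is the Boolean algebra of formulas
generated by `L`-formulas together with `P(x)`: these are exactly the sets
`(s₁ ∩ P) ∪ (s₂ \ P)` with `s₁, s₂` being `A`-definable `L`-sets. -/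
def PDset (L : FirstOrder.Language.{u, u}) {U : Type u} [L.Structure U] (PU A : Set U)
    (α : Type u) : Set (Set (α → U)) :=
  {s | ∃ s₁ s₂ : Set (α → U), A.Definable L s₁ ∧ A.Definable L s₂ ∧
    s = (s₁ ∩ PSetC PU α) ∪ (s₂ \ PSetC PU α)}

/-! ### The canonical retraction -/

/-- The defining relation of the retraction `F̃_M` of the paper: `g` (the values of
`F̃_M(μ)`) agrees over `M'` with (the `L`-reduct of) every global `Δ`-measure extending
`μ|N` and giving `P(x)` measure `1`. Here `f` gives the values of `μ`, and the ambient
data is `M ≺⁺ M'`, `(M', M) ≺⁺ (N', N)`, with `(U, PU)` an elementary extension of the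
pair `(N', N)`. -/
def TildeFMRel (L : FirstOrder.Language.{u, u}) {U : Type u} [L.Structure U] {α : Type u}
    (M'set Nset PU : Set U) (f g : Set (α → U) → ℝ) : Prop :=
  ∀ ν : FAM (α → U) (PDset L PU Set.univ α),
    agreeOn (Dset L Nset α) ν.val f → ν.val (PSetC PU α) = 1 →
    agreeOn (Dset L M'set α) g ν.val

/-- `F` is the canonical retraction `F_M` (of Chernikov–Pillay–Simon) from the space of
global `Mset`-invariant Keisler measures onto the space of global measures finitely
satisfiable in `Mset`: it maps invariant measures to finitely satisfiable ones, fixes the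
finitely satisfiable ones, satisfies `F(μ)|M = μ|M`, is affine and continuous, and agrees
on `Mset`-invariant types with Simon's canonical retraction (constructed via the pair
`(M', Mset) ≺⁺ (N', Nset)`, elementarily embedded in `(U, PU)`). -/
def IsCPS (L : FirstOrder.Language.{u, u}) {U : Type u} [L.Structure U]
    (Mset M'set Nset PU : Set U)
    (F : ∀ γ : Type u, KMeasure L (Set.univ : Set U) γ → KMeasure L (Set.univ : Set U) γ) :
    Prop :=
  (∀ (γ : Type u) (μ : KMeasure L (Set.univ : Set U) γ), InvariantOn L μ.val Mset →
    InvariantOn L (F γ μ).val Mset ∧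
      FinSatIn (Dset L (Set.univ : Set U) γ) (F γ μ).val Mset ∧
      agreeOn (Dset L Mset γ) (F γ μ).val μ.val) ∧
  (∀ (γ : Type u) (μ : KMeasure L (Set.univ : Set U) γ), InvariantOn L μ.val Mset →
    FinSatIn (Dset L (Set.univ : Set U) γ) μ.val Mset →
    agreeOn (Dset L (Set.univ : Set U) γ) (F γ μ).val μ.val) ∧
  (∀ (γ : Type u) (μ ν : KMeasure L (Set.univ : Set U) γ), InvariantOn L μ.val Mset →
    InvariantOn L ν.val Mset → ∀ (t : ℝ) (h0 : 0 ≤ t) (h1 : t ≤ 1),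
      agreeOn (Dset L (Set.univ : Set U) γ) (F γ (FAM.mix t h0 h1 μ ν)).val
        (FAM.mix t h0 h1 (F γ μ) (F γ ν)).val) ∧
  (∀ (γ : Type u) (μ : KMeasure L (Set.univ : Set U) γ), InvariantOn L μ.val Mset →
    ∀ s ∈ Dset L (Set.univ : Set U) γ, ∀ ε : ℝ, 0 < ε →
      ∃ (k : ℕ) (ts : Fin k → Set (γ → U)) (δ : ℝ), 0 < δ ∧
        (∀ i, (Set.univ : Set U).Definable L (ts i)) ∧
        ∀ ν : KMeasure L (Set.univ : Set U) γ, InvariantOn L ν.val Mset →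
          (∀ i, |ν.val (ts i) - μ.val (ts i)| < δ) →
          |(F γ ν).val s - (F γ μ).val s| < ε) ∧
  (∀ (γ : Type u) (p : KMeasure L (Set.univ : Set U) γ), InvariantOn L p.val Mset →
    IsTypeOn (Dset L (Set.univ : Set U) γ) p.val →
    InvariantOn L (F γ p).val Mset ∧ TildeFMRel L M'set Nset PU p.val (F γ p).val)

/-! ### Indiscernible measures and products of smooth measures -/

/-- The cylinder in the `i`-th copy of the variables, inside an `ω`-indexed product. -/
def cylAt {U : Type u} {α : Type u} (i : ℕ) (s : Set (α → U)) : Set ((ℕ × α) → U) :=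
  {h | (fun a => h (i, a)) ∈ s}

/-- A measure in the variables `(x_i)_{i < ω}` (given by its values `f`) is indiscernible
over `Mset`. -/
def IndiscernibleOver (L : FirstOrder.Language.{u, u}) {U : Type u} [L.Structure U]
    {α : Type u} (f : Set ((ℕ × α) → U) → ℝ) (Mset : Set U) : Prop :=
  ∀ (n : ℕ) (φ : (L[[Mset]]).Formula (Fin n × α)) (i j : Fin n → ℕ),
    StrictMono i → StrictMono j →
    f {h | φ.Realize fun p => h (i p.1, p.2)} = f {h | φ.Realize fun p => h (j p.1, p.2)}

/-! ### Local (Δ-) measures -/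

/-- The collection of instances, with parameters in `A`, of the formulas in the family
`Δ` (a family of formulas `φ(x; y)` in the object variables `α`). -/
def DeltaSet (L : FirstOrder.Language.{u, u}) {U : Type u} [L.Structure U] {α : Type u}
    (Δ : ∀ m : ℕ, Set (L.Formula (α ⊕ Fin m))) (A : Set U) : Set (Set (α → U)) :=
  {s | ∃ (m : ℕ) (φ : L.Formula (α ⊕ Fin m)) (b : Fin m → U),
    φ ∈ Δ m ∧ (∀ j, b j ∈ A) ∧ s = defFam φ b}

/-- A collection of sets is a Boolean algebra of sets. -/
def IsBoolAlg {X : Type u} (D : Set (Set X)) : Prop :=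
  Set.univ ∈ D ∧ (∀ s ∈ D, sᶜ ∈ D) ∧ ∀ s ∈ D, ∀ t ∈ D, s ∩ t ∈ D

/-- The operation `φ(x, y) ↦ (∃ y) φ(x, y)` on subsets of the `xy`-variable space. -/
def exY {U : Type u} {α β : Type u} (s : Set ((α ⊕ β) → U)) : Set ((α ⊕ β) → U) :=
  {h | ∃ b : β → U, Sum.elim (fun a => h (Sum.inl a)) b ∈ s}

/-- A global Keisler measure (given by its values `f`) is smooth: its restriction to some
small model has a unique extension to a global Keisler measure. -/
def GSmooth (L : FirstOrder.Language.{u, u}) {U : Type u} [L.Structure U]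
    (κ : Cardinal.{u}) {α : Type u} (f : Set (α → U) → ℝ) : Prop :=
  ∃ M₀ : Set U, IsElemSubset L U M₀ ∧ SmallSet L κ M₀ ∧
    SmoothOn (Dset L M₀ α) (Dset L (Set.univ : Set U) α) f


/-! ### Auxiliary infrastructure -/

section Aux

variable {L : FirstOrder.Language.{u, u}} {U : Type u} [L.Structure U] {α : Type u}

/-- Conjunction of a list of formulas. -/
noncomputable def lconj {L' : FirstOrder.Language.{u, u}} {β : Type v} :
    List (L'.Formula β) → L'.Formula β
  | [] => ⊤
  | φ :: l => φ ⊓ lconj l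

theorem realize_lconj {L' : FirstOrder.Language.{u, u}} [L'.Structure U] {β : Type v}
    {l : List (L'.Formula β)} {v : β → U} :
    (lconj l).Realize v ↔ ∀ φ ∈ l, φ.Realize v := by
  induction l with
  | nil => simp [lconj]
  | cons φ l ih => simp [lconj, ih]

/-- Realization only depends on the free variables. -/
theorem realize_congr_vars {β : Type u} {φ : L.Formula β} {v w : β → U}
    (h : ∀ x ∈ (letI := Classical.decEq β; φ.freeVarFinset), v x = w x) :
    φ.Realize v ↔ φ.Realize w := by
  letI := Classical.decEq β
  have h1 := BoundedFormula.realize_restrictFreeVar (M := U) (φ := φ) (f := Subtype.val)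
    (v := w) (xs := default) v (fun a => (h a.1 (by exact_mod_cast a.2)).symm)
  have h2 := BoundedFormula.realize_restrictFreeVar (M := U) (φ := φ) (f := Subtype.val)
    (v := w) (xs := default) w (fun a => rfl)
  unfold Formula.Realize
  rw [← h1, ← h2]

/-- Basic membership lemma for `defFam`. -/
theorem mem_defFam {L' : FirstOrder.Language.{u, u}} [L'.Structure U] {m : ℕ}
    {φ : L'.Formula (α ⊕ Fin m)} {b : Fin m → U} {a : α → U} :
    a ∈ defFam φ b ↔ φ.Realize (Sum.elim a b) := Iff.rfl

theorem defFam_not {L' : FirstOrder.Language.{u, u}} [L'.Structure U] {m : ℕ}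
    (φ : L'.Formula (α ⊕ Fin m)) (b : Fin m → U) :
    defFam φ.not b = (defFam φ b)ᶜ := by
  ext a; simp [mem_defFam, Formula.realize_not, Set.mem_compl_iff]

theorem defFam_inf {L' : FirstOrder.Language.{u, u}} [L'.Structure U] {m : ℕ}
    (φ ψ : L'.Formula (α ⊕ Fin m)) (b : Fin m → U) :
    defFam (φ ⊓ ψ) b = defFam φ b ∩ defFam ψ b := by
  ext a; simp [mem_defFam, Formula.realize_inf, Set.mem_inter_iff]

theorem defFam_sup {L' : FirstOrder.Language.{u, u}} [L'.Structure U] {m : ℕ}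
    (φ ψ : L'.Formula (α ⊕ Fin m)) (b : Fin m → U) :
    defFam (φ ⊔ ψ) b = defFam φ b ∪ defFam ψ b := by
  ext a; simp [mem_defFam, Formula.realize_sup, Set.mem_union]

theorem mem_defFam_relabel_inr {L' : FirstOrder.Language.{u, u}} [L'.Structure U] {m : ℕ}
    (ψ : L'.Formula (Fin m)) (b : Fin m → U) (a : α → U) :
    a ∈ defFam (ψ.relabel Sum.inr) b ↔ ψ.Realize b := by
  rw [mem_defFam, Formula.realize_relabel, Sum.elim_comp_inr]

/-- A set defined by an `L`-formula with parameters from `A` is `A`-definable. -/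
theorem defFam_mem_Dset {A : Set U} {m : ℕ} (φ : L.Formula (α ⊕ Fin m)) (e : Fin m → U)
    (he : ∀ j, e j ∈ A) : defFam φ e ∈ Dset L A α := by
  show A.Definable L (defFam φ e)
  rw [Set.definable_iff_exists_formula_sum]
  refine ⟨φ.relabel (Sum.elim Sum.inr (fun j => Sum.inl ⟨e j, he j⟩)), ?_⟩
  ext a
  have hfun : (Sum.elim ((↑) : A → U) a) ∘
      (Sum.elim Sum.inr (fun j => Sum.inl ⟨e j, he j⟩)) = Sum.elim a e := by
    funext x; rcases x with x | j <;> rfl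
  simp only [mem_defFam, Set.mem_setOf_eq, Formula.realize_relabel, hfun]

/-- Parameter extraction (general version): an `A`-definable set is defined by an
`L`-formula with finitely many parameters from `A`. -/
theorem exists_formula_params_of_definable {β : Type v} {A : Set U} {s : Set (β → U)}
    (hs : A.Definable L s) :
    ∃ (m : ℕ) (φ : L.Formula (β ⊕ Fin m)) (e : Fin m → U),
      (∀ j, e j ∈ A) ∧ s = {b : β → U | φ.Realize (Sum.elim b e)} := by
  classical
  rw [Set.definable_iff_finitely_definable] at hs
  obtain ⟨A0, hA0, hdef⟩ := hs
  rw [Set.definable_iff_exists_formula_sum] at hdef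
  obtain ⟨φ, rfl⟩ := hdef
  haveI : Fintype ↥(A0 : Set U) := FinsetCoe.fintype A0
  obtain ⟨eq⟩ : Nonempty (↥(A0 : Set U) ≃ Fin (Fintype.card ↥(A0 : Set U))) :=
    ⟨Fintype.equivFin _⟩
  refine ⟨_, φ.relabel (Sum.elim (fun c => Sum.inr (eq c)) Sum.inl),
    fun j => ((eq.symm j : ↥(A0 : Set U)) : U), fun j => hA0 (eq.symm j).2, ?_⟩
  ext a
  have hfun : (Sum.elim a (fun j => ((eq.symm j : ↥(A0 : Set U)) : U))) ∘
      (Sum.elim (fun c => Sum.inr (eq c)) Sum.inl) = Sum.elim ((↑) : ↥(A0:Set U) → U) a := by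
    funext x
    rcases x with c | a'
    · simp
    · rfl
  simp only [Set.mem_setOf_eq, Formula.realize_relabel, hfun]

/-- Parameter extraction: an `A`-definable set is defined by an `L`-formula with finitely
many parameters from `A`. -/
theorem exists_defFam_of_mem_Dset {A : Set U} {s : Set (α → U)} (hs : s ∈ Dset L A α) :
    ∃ (m : ℕ) (φ : L.Formula (α ⊕ Fin m)) (e : Fin m → U),
      (∀ j, e j ∈ A) ∧ s = defFam φ e := by
  obtain ⟨m, φ, e, he, hrep⟩ := exists_formula_params_of_definable (L := L) (β := α) hs
  exact ⟨m, φ, e, he, hrep⟩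

/-- Conversion of an `L[[M]]`-formula into an `L`-formula with extra parameters
from `M`. -/
theorem exists_L_formula_of_LM_formula {Mset : Set U} {k : ℕ}
    (χ : (L[[Mset]]).Formula (α ⊕ Fin k)) :
    ∃ (k' : ℕ) (θ : L.Formula (α ⊕ Fin (k + k'))) (c : Fin k' → U), (∀ j, c j ∈ Mset) ∧
      ∀ e : Fin k → U, defFam χ e = defFam θ ((Sum.elim e c) ∘ ⇑finSumFinEquiv.symm) := by
  have hs : (Mset.Definable L {h : (α ⊕ Fin k) → U | χ.Realize h}) := ⟨χ, rfl⟩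
  obtain ⟨k', θ', c, hc, hrep⟩ := exists_defFam_of_mem_Dset (α := α ⊕ Fin k) hs
  refine ⟨k', θ'.relabel (Sum.elim
      (Sum.elim Sum.inl (fun j => Sum.inr (finSumFinEquiv (Sum.inl j))))
      (fun j' => Sum.inr (finSumFinEquiv (Sum.inr j')))), c, hc, fun e => ?_⟩
  ext a
  have hfun : (Sum.elim a ((Sum.elim e c) ∘ ⇑finSumFinEquiv.symm)) ∘
      (Sum.elim (Sum.elim Sum.inl (fun j => Sum.inr (finSumFinEquiv (Sum.inl j))))
        (fun j' => Sum.inr (finSumFinEquiv (Sum.inr j')))) =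
      Sum.elim (Sum.elim a e) c := by
    funext x
    rcases x with (a' | j) | j'
    · rfl
    · simp
    · simp
  have h2 : Sum.elim a e ∈ {h : (α ⊕ Fin k) → U | χ.Realize h} ↔
      Sum.elim a e ∈ defFam θ' c := by rw [hrep]
  simp only [Set.mem_setOf_eq, mem_defFam] at h2
  simp only [mem_defFam, Formula.realize_relabel, hfun]
  exact h2

theorem defFam_LM_mem_Dset_univ {Mset : Set U} {k : ℕ}
    (χ : (L[[Mset]]).Formula (α ⊕ Fin k)) (e : Fin k → U) :
    defFam χ e ∈ Dset L (Set.univ : Set U) α := by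
  obtain ⟨k', θ, c, hc, hrep⟩ := exists_L_formula_of_LM_formula χ
  rw [hrep]
  exact defFam_mem_Dset θ _ (fun j => trivial)

theorem defFam_LM_mem_Dset_Mset {Mset : Set U} {k : ℕ}
    (χ : (L[[Mset]]).Formula (α ⊕ Fin k)) (d : Fin k → U) (hd : ∀ j, d j ∈ Mset) :
    defFam χ d ∈ Dset L Mset α := by
  obtain ⟨k', θ, c, hc, hrep⟩ := exists_L_formula_of_LM_formula χ
  rw [hrep]
  refine defFam_mem_Dset θ _ ?_
  intro j
  rcases h : finSumFinEquiv.symm j with j1 | j2 <;> simp [h, hd, hc]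

theorem defFam_lift {Mset : Set U} {k : ℕ} (θ : L.Formula (α ⊕ Fin k)) (e : Fin k → U) :
    defFam ((L.lhomWithConstants Mset).onFormula θ) e = defFam θ e := by
  ext a
  exact LHom.realize_onFormula _ _

end Aux

/-! #### FAM arithmetic -/

theorem FAM.val_empty {X : Type u} {D : Set (Set X)} (ν : FAM X D) (h : ∅ ∈ D) :
    ν.val ∅ = 0 := by
  have h2 := ν.additive ∅ ∅ h h disjoint_bot_left
  rw [Set.empty_union] at h2
  linarith

theorem FAM.val_compl {X : Type u} {D : Set (Set X)} (ν : FAM X D) {s : Set X}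
    (hs : s ∈ D) (hsc : sᶜ ∈ D) : ν.val sᶜ = 1 - ν.val s := by
  have h2 := ν.additive s sᶜ hs hsc disjoint_compl_right
  rw [Set.union_compl_self, ν.isProb] at h2
  linarith

theorem FAM.val_le_one {X : Type u} {D : Set (Set X)} (ν : FAM X D) {s : Set X}
    (hs : s ∈ D) (hsc : sᶜ ∈ D) : ν.val s ≤ 1 := by
  have h1 := ν.val_compl hs hsc
  have h2 := ν.nonneg _ hsc
  linarith

/-- Values of a global Keisler measure lie in `[0,1]`. -/
theorem KMeasure.val_mem_Icc {L : FirstOrder.Language.{u, u}} {U : Type u} [L.Structure U]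
    {α : Type u} {A : Set U} (ν : KMeasure L A α) {s : Set (α → U)} (hs : s ∈ Dset L A α) :
    ν.val s ∈ Set.Icc (0 : ℝ) 1 := by
  have hsc : sᶜ ∈ Dset L A α := Set.Definable.compl hs
  exact ⟨ν.nonneg s hs, ν.val_le_one hs hsc⟩

section Aux2

variable {L : FirstOrder.Language.{u, u}} {U : Type u} [L.Structure U] {α : Type u}

/-- Substitute parameters from `M` (as constants) into the tail of the variables of a
formula over `L[[M]]`. -/
noncomputable def substFin {Mset : Set U} {m k : ℕ} (ψ : (L[[Mset]]).Formula (Fin (m + k)))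
    (c : Fin k → U) (hc : ∀ j, c j ∈ Mset) : (L[[Mset]]).Formula (Fin m) :=
  (ψ.relabel ⇑finSumFinEquiv.symm).subst
    (Sum.elim Term.var (fun j => (L.con (⟨c j, hc j⟩ : Mset)).term))

theorem realize_substFin {Mset : Set U} {m k : ℕ} {ψ : (L[[Mset]]).Formula (Fin (m + k))}
    {c : Fin k → U} {hc : ∀ j, c j ∈ Mset} {e : Fin m → U} :
    (substFin (L := L) ψ c hc).Realize e ↔
      ψ.Realize ((Sum.elim e c) ∘ ⇑finSumFinEquiv.symm) := by
  unfold substFin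
  have h2 : Formula.Realize ((ψ.relabel ⇑finSumFinEquiv.symm).subst
      (Sum.elim Term.var fun j => (L.con (⟨c j, hc j⟩ : Mset)).term)) e ↔
      (ψ.relabel ⇑finSumFinEquiv.symm).Realize
        (fun a => (Sum.elim Term.var (fun j => (L.con (⟨c j, hc j⟩ : Mset)).term) a).realize e) :=
    BoundedFormula.realize_subst
  rw [h2, Formula.realize_relabel]
  apply iff_of_eq
  congr 1
  funext x
  rcases h : finSumFinEquiv.symm x with i | j <;>
    simp [h, Term.realize_con]

variable [Nonempty U]

/-- Universal quantification over the (possibly infinite) first block of variables: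
only finitely many of them are free, so this can be expressed as a formula. -/
noncomputable def allA {L' : FirstOrder.Language.{u, u}} {β : Type u}
    (φ : L'.Formula (α ⊕ β)) : L'.Formula β :=
  letI := Classical.decEq (α ⊕ β)
  haveI : Finite {a : α // Sum.inl a ∈ φ.freeVarFinset} :=
    Finite.of_injective
      (fun a => (⟨Sum.inl a.1, a.2⟩ : {x // x ∈ φ.freeVarFinset}))
      (fun a b hab => by
        apply Subtype.ext
        have := congrArg Subtype.val hab
        simpa using this)
  Formula.iAlls {a : α // Sum.inl a ∈ φ.freeVarFinset}
    (φ.restrictFreeVar (fun x : ↥(↑φ.freeVarFinset : Set (α ⊕ β)) =>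
      match x with
      | ⟨Sum.inl a, h⟩ => Sum.inr (⟨a, by simpa using h⟩ :
          {a : α // Sum.inl a ∈ φ.freeVarFinset})
      | ⟨Sum.inr b, _⟩ => Sum.inl b))

theorem realize_allA {L' : FirstOrder.Language.{u, u}} [L'.Structure U] {β : Type u}
    {φ : L'.Formula (α ⊕ β)} {w : β → U} :
    (allA (α := α) φ).Realize w ↔ ∀ a : α → U, φ.Realize (Sum.elim a w) := by
  letI := Classical.decEq (α ⊕ β)
  haveI hfin : Finite {a : α // Sum.inl a ∈ φ.freeVarFinset} :=
    Finite.of_injective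
      (fun a => (⟨Sum.inl a.1, a.2⟩ : {x // x ∈ φ.freeVarFinset}))
      (fun a b hab => by
        apply Subtype.ext
        have := congrArg Subtype.val hab
        simpa using this)
  unfold allA
  rw [Formula.realize_iAlls]
  unfold Formula.Realize
  constructor
  · intro h a
    refine (BoundedFormula.realize_restrictFreeVar (Sum.elim a w) ?_).mp (h (fun x => a x.1))
    rintro ⟨a' | b', h'⟩ <;> rfl
  · intro h i
    refine (BoundedFormula.realize_restrictFreeVar (Sum.elim (fun a => if ha : Sum.inl a ∈ φ.freeVarFinset
        then i ⟨a, ha⟩ else Classical.arbitrary U) w) ?_).mpr (h _)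
    rintro ⟨a' | b', h'⟩
    · have hin : Sum.inl a' ∈ φ.freeVarFinset := by simpa using h'
      show i _ = dite _ _ _
      rw [dif_pos hin]
    · rfl

end Aux2

section TV

variable {L : FirstOrder.Language.{u, u}} {U : Type u} [L.Structure U]

theorem tv_tuple_L {Mset : Set U} (hM : IsElemSubset L U Mset) :
    ∀ (m k : ℕ) (θ : L.Formula (Fin m ⊕ Fin k)) (c : Fin k → U), (∀ j, c j ∈ Mset) →
    (∃ v : Fin m → U, θ.Realize (Sum.elim v c)) →
    ∃ v : Fin m → U, (∀ i, v i ∈ Mset) ∧ θ.Realize (Sum.elim v c) := by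
  intro m
  induction m with
  | zero =>
    rintro k θ c hc ⟨v, hv⟩
    exact ⟨v, fun i => i.elim0, hv⟩
  | succ m ih =>
    rintro k θ c hc ⟨v, hv⟩
    set g : Fin (m+1) ⊕ Fin k → (Fin m ⊕ Fin k) ⊕ Fin 1 :=
      Sum.elim (Fin.lastCases (Sum.inr 0) (fun i => Sum.inl (Sum.inl i)))
        (fun j => Sum.inl (Sum.inr j)) with hg
    set θ' : L.Formula ((Fin m ⊕ Fin k) ⊕ Fin 1) := θ.relabel g with hθ'
    have hre : ∀ (v' : Fin (m+1) → U) (w : Fin m → U) (z : Fin 1 → U),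
        (∀ i : Fin m, w i = v' i.castSucc) → (z 0 = v' (Fin.last m)) →
        (θ'.Realize (Sum.elim (Sum.elim w c) z) ↔ θ.Realize (Sum.elim v' c)) := by
      intro v' w z hw hz
      rw [hθ', Formula.realize_relabel]
      apply iff_of_eq
      congr 1
      funext x
      rcases x with i | j
      · induction i using Fin.lastCases with
        | last => simpa [hg] using hz
        | cast i => simpa [hg] using hw i
      · rfl
    set θ'' : L.Formula (Fin m ⊕ Fin k) := Formula.iExs (Fin 1) θ' with hθ''
    have hre'' : ∀ w : (Fin m ⊕ Fin k) → U,
        θ''.Realize w ↔ ∃ z : Fin 1 → U, θ'.Realize (Sum.elim w z) := by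
      intro w
      rw [hθ'', Formula.realize_iExs]
    have hex : ∃ w : Fin m → U, θ''.Realize (Sum.elim w c) := by
      refine ⟨fun i => v i.castSucc, (hre'' _).mpr ⟨fun _ => v (Fin.last m), ?_⟩⟩
      exact (hre v _ _ (fun i => rfl) rfl).mpr hv
    obtain ⟨d, hd, hd2⟩ := ih k θ'' c hc hex
    obtain ⟨z, hz⟩ := (hre'' _).mp hd2
    -- now use the Tarski-Vaught property for the last variable
    set φ : L.Formula (Fin (m + k) ⊕ Fin 1) :=
      θ'.relabel (Sum.map ⇑finSumFinEquiv id) with hφ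
    set b : Fin (m + k) → U := (Sum.elim d c) ∘ ⇑finSumFinEquiv.symm with hb
    have hbM : ∀ i, b i ∈ Mset := by
      intro i
      rcases h : finSumFinEquiv.symm i with i1 | j1 <;> simp [hb, h, hd, hc]
    have hφre : ∀ z' : Fin 1 → U,
        φ.Realize (Sum.elim b z') ↔ θ'.Realize (Sum.elim (Sum.elim d c) z') := by
      intro z'
      rw [hφ, Formula.realize_relabel]
      apply iff_of_eq
      congr 1
      funext x
      rcases x with x | j
      · simp [hb]
      · rfl
    obtain ⟨a, haM, ha⟩ := hM.2 (m + k) φ b hbM ⟨z, (hφre z).mpr hz⟩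
    refine ⟨Fin.lastCases (a 0) d, ?_, ?_⟩
    · intro i
      induction i using Fin.lastCases with
      | last => simpa using haM 0
      | cast i => simpa using hd i
    · refine (hre (Fin.lastCases (a 0) d) d a ?_ ?_).mp ((hφre a).mp ha)
      · intro i; simp
      · simp
  
theorem tv_tuple {Mset : Set U} (hM : IsElemSubset L U Mset) {m : ℕ}
    (Θ : (L[[Mset]]).Formula (Fin m)) (h : ∃ b : Fin m → U, Θ.Realize b) :
    ∃ d : Fin m → U, (∀ i, d i ∈ Mset) ∧ Θ.Realize d := by
  have hs : Mset.Definable L {b : Fin m → U | Θ.Realize b} := ⟨Θ, rfl⟩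
  obtain ⟨k, θ, e, he, hrep⟩ := exists_formula_params_of_definable hs
  obtain ⟨b, hb⟩ := h
  have hb' : θ.Realize (Sum.elim b e) := by
    have : b ∈ {b : Fin m → U | Θ.Realize b} := hb
    rw [hrep] at this
    exact this
  obtain ⟨d, hdM, hd⟩ := tv_tuple_L hM m k θ e he ⟨b, hb'⟩
  refine ⟨d, hdM, ?_⟩
  have : d ∈ {b : Fin m → U | θ.Realize (Sum.elim b e)} := hd
  rw [← hrep] at this
  exact this

end TV

section Main

variable {L : FirstOrder.Language.{u, u}} {U : Type u} [L.Structure U] {α : Type u}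
variable {Mset : Set U}

/-- A definable global measure is an heir over `M`. -/
theorem heir_of_definable (hM : IsElemSubset L U Mset)
    (ν : KMeasure L (Set.univ : Set U) α) (hdef : DefinableOver L ν.val Mset) :
    IsHeir L ν.val Mset (Set.univ : Set U) := by
  intro ε hε n m χ b _
  have hconv := fun i => exists_L_formula_of_LM_formula (L := L) (χ i)
  choose k' θ c hc hrep using hconv
  have h1 := fun i => ((hdef.2 (m + k' i) (θ i) (ν.val (defFam (χ i) b) + ε)).1
    ((Sum.elim b (c i)) ∘ ⇑finSumFinEquiv.symm) (by rw [← hrep i b]; linarith))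
  have h2 := fun i => ((hdef.2 (m + k' i) (θ i) (ν.val (defFam (χ i) b) - ε)).2
    ((Sum.elim b (c i)) ∘ ⇑finSumFinEquiv.symm) (by rw [← hrep i b]; linarith))
  choose ψ₁ hψ₁b hψ₁ using h1
  choose ψ₂ hψ₂b hψ₂ using h2
  have hΘb : Formula.Realize (M := U) (lconj (L' := L[[Mset]]) (List.ofFn
      (fun i => substFin (L := L) (m := m) (k := k' i) ((ψ₁ i) ⊓ (ψ₂ i)) (c i) (hc i)))) b := by
    rw [realize_lconj]
    intro φ hφ
    rw [List.mem_ofFn] at hφ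
    obtain ⟨i, rfl⟩ := hφ
    rw [realize_substFin, Formula.realize_inf]
    exact ⟨hψ₁b i, hψ₂b i⟩
  obtain ⟨d, hdM, hd⟩ := tv_tuple hM _ ⟨b, hΘb⟩
  refine ⟨d, hdM, fun i => ?_⟩
  rw [realize_lconj] at hd
  have hdi := hd _ (by rw [List.mem_ofFn]; exact ⟨i, rfl⟩)
  rw [realize_substFin, Formula.realize_inf] at hdi
  have e1 := hψ₁ i _ hdi.1
  have e2 := hψ₂ i _ hdi.2
  rw [← hrep i d] at e1 e2
  rw [abs_sub_lt_iff]
  constructor <;> linarith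

/-- Any heir of `μ` agrees with a definable extension of `μ` on all global definable
sets. -/
theorem heir_agrees_definable
    (μ : KMeasure L Mset α)
    (ν : KMeasure L (Set.univ : Set U) α) (hext : agreeOn (Dset L Mset α) ν.val μ.val)
    (hdef : DefinableOver L ν.val Mset)
    (ν₁ : KMeasure L (Set.univ : Set U) α) (hext₁ : agreeOn (Dset L Mset α) ν₁.val μ.val)
    (hheir₁ : IsHeir L ν₁.val Mset (Set.univ : Set U)) :
    agreeOn (Dset L (Set.univ : Set U) α) ν₁.val ν.val := by
  intro s hs
  obtain ⟨k, θ, e, -, rfl⟩ := exists_defFam_of_mem_Dset hs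
  by_contra hne
  have hmem : defFam θ e ∈ Dset L (Set.univ : Set U) α :=
    defFam_mem_Dset θ e (fun j => trivial)
  have hIcc := ν.val_mem_Icc hmem
  have hIcc₁ := ν₁.val_mem_Icc hmem
  set r := ν.val (defFam θ e) with hr
  set r₁ := ν₁.val (defFam θ e) with hr₁
  set ε := |r₁ - r| / 2 with hε
  have hεpos : 0 < ε := by
    have h2 : (0:ℝ) < |r₁ - r| := abs_pos.mpr (sub_ne_zero.mpr hne)
    rw [hε]; linarith
  have habs : |r₁ - r| ≤ 1 := by
    rw [abs_sub_le_iff]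
    obtain ⟨a1, a2⟩ := hIcc
    obtain ⟨b1, b2⟩ := hIcc₁
    constructor <;> linarith
  have hεle : ε ≤ 1/2 := by rw [hε]; linarith
  obtain ⟨ψ₁, hψ₁e, hψ₁⟩ := (hdef.2 k θ (r + ε)).1 e (by linarith)
  obtain ⟨ψ₂, hψ₂e, hψ₂⟩ := (hdef.2 k θ (r - ε)).2 e (by linarith)
  set ψ : (L[[Mset]]).Formula (Fin k) := ψ₁ ⊓ ψ₂ with hψ
  set χ₀ : (L[[Mset]]).Formula (α ⊕ Fin k) := ψ.relabel Sum.inr with hχ₀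
  set χ₁ : (L[[Mset]]).Formula (α ⊕ Fin k) :=
    ((L.lhomWithConstants Mset).onFormula θ) ⊓ χ₀ with hχ₁
  obtain ⟨d, hdM, hd⟩ := hheir₁ ε hεpos 2 k ![χ₀, χ₁] e (fun j => trivial)
  have h0 := hd 0
  have h1 := hd 1
  simp only [Matrix.cons_val_zero, Matrix.cons_val_one, Matrix.head_cons] at h0 h1
  have hχ₀e : defFam (α := α) χ₀ e = Set.univ := by
    ext a
    simp only [hχ₀, mem_defFam_relabel_inr, Set.mem_univ, iff_true]
    rw [hψ, Formula.realize_inf]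
    exact ⟨hψ₁e, hψ₂e⟩
  have hψd : ψ.Realize d := by
    by_contra hcon
    have hχ₀d : defFam (α := α) χ₀ d = ∅ := by
      ext a
      simp only [hχ₀, mem_defFam_relabel_inr, Set.mem_empty_iff_false, iff_false]
      exact hcon
    rw [hχ₀e, hχ₀d, ν₁.isProb, FAM.val_empty ν₁ (Set.definable_empty)] at h0
    rw [show (1:ℝ) - 0 = 1 by ring, abs_one] at h0
    linarith
  have hχ₀d : defFam (α := α) χ₀ d = Set.univ := by
    ext a
    simp only [hχ₀, mem_defFam_relabel_inr, Set.mem_univ, iff_true]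
    exact hψd
  have hχ₁e : defFam χ₁ e = defFam θ e := by
    rw [hχ₁, defFam_inf, defFam_lift, hχ₀e, Set.inter_univ]
  have hχ₁d : defFam χ₁ d = defFam θ d := by
    rw [hχ₁, defFam_inf, defFam_lift, hχ₀d, Set.inter_univ]
  have hθd_mem : defFam θ d ∈ Dset L Mset α := defFam_mem_Dset θ d hdM
  have hvald : ν₁.val (defFam θ d) = ν.val (defFam θ d) := by
    rw [hext₁ _ hθd_mem, hext _ hθd_mem]
  rw [hχ₁e, hχ₁d, hvald] at h1
  rw [hψ, Formula.realize_inf] at hψd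
  have hb1 := hψ₁ d hψd.1
  have hb2 := hψ₂ d hψd.2
  have hx : |ν.val (defFam θ d) - r| < ε := by
    rw [abs_sub_lt_iff]
    constructor <;> linarith
  have htri : |r₁ - r| ≤ |r₁ - ν.val (defFam θ d)| + |ν.val (defFam θ d) - r| :=
    abs_sub_le _ _ _
  have hlt : |r₁ - r| < 2 * ε := by linarith
  rw [hε] at hlt
  linarith

end Main

/-! #### The constraint system for the uniqueness-of-heirs compactness argument -/

section ConSec

variable (L : FirstOrder.Language.{u, u}) (U : Type u) [L.Structure U] (α : Type u)
    (Mset : Set U)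

/-- Constraints cutting out the closed sets of measures used in the compactness
argument. -/
inductive Con : Type u
  | add (s t : Set (α → U)) (hs : s ∈ Dset L (Set.univ : Set U) α)
      (ht : t ∈ Dset L (Set.univ : Set U) α) (hd : Disjoint s t) : Con
  | extend (s : Set (α → U)) (hs : s ∈ Dset L Mset α) : Con
  | heir (n m : ℕ) (χ : Fin n → (L[[Mset]]).Formula (α ⊕ Fin m)) (e : Fin m → U) : Con
  | target : Con

variable {L U α Mset}

/-- Arity of the extra parameter block of a constraint. -/
def Con.earity : Con L U α Mset → ℕ
  | .heir _ m _ _ => m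
  | _ => 0

/-- Parameters of a constraint. -/
def Con.epar : (i : Con L U α Mset) → Fin i.earity → U
  | .heir _ _ _ e => e
  | .add _ _ _ _ _ => Fin.elim0
  | .extend _ _ => Fin.elim0
  | .target => Fin.elim0

/-- The closed constraint sets. -/
def Con.Z (μv : Set (α → U) → ℝ) (s₀ : Set (α → U)) (r : ℝ) :
    Con L U α Mset → Set ((Set (α → U)) → ℝ)
  | .add s t _ _ _ => {f | f (s ∪ t) = f s + f t}
  | .extend s _ => {f | f s = μv s}
  | .heir n m χ e => {f | (fun i => f (defFam (χ i) e)) ∈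
      closure {v : Fin n → ℝ | ∃ d : Fin m → U, (∀ j, d j ∈ Mset) ∧
        v = fun i => μv (defFam (χ i) d)}}
  | .target => {f | r ≤ f s₀}

theorem Con.Z_closed (μv : Set (α → U) → ℝ) (s₀ : Set (α → U)) (r : ℝ)
    (i : Con L U α Mset) : IsClosed (i.Z μv s₀ r) := by
  cases i with
  | add s t hs ht hd =>
      exact isClosed_eq (continuous_apply (s ∪ t)) ((continuous_apply s).add (continuous_apply t))
  | extend s hs => exact isClosed_eq (continuous_apply _) continuous_const
  | heir n m χ e =>
      exact IsClosed.preimage (continuous_pi (fun i => continuous_apply _)) isClosed_closure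
  | target => exact isClosed_le continuous_const (continuous_apply _)

/-- The sets mentioned by a constraint. -/
noncomputable def Con.mention (s₀ : Set (α → U)) : Con L U α Mset → Finset (Set (α → U))
  | .add s t _ _ _ => {s, t, s ∪ t}
  | .extend s _ => {s}
  | .heir _ _ χ e => Finset.image (fun i => defFam (χ i) e) Finset.univ
  | .target => {s₀}

theorem Con.mention_definable {s₀ : Set (α → U)} (hs₀ : s₀ ∈ Dset L (Set.univ : Set U) α)
    (i : Con L U α Mset) : ∀ s ∈ i.mention s₀, s ∈ Dset L (Set.univ : Set U) α := by
  cases i with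
  | add s t hs ht hd =>
      intro x hx
      simp only [Con.mention, Finset.mem_insert, Finset.mem_singleton] at hx
      rcases hx with rfl | rfl | rfl
      · exact hs
      · exact ht
      · exact Set.Definable.union hs ht
  | extend s hs =>
      intro x hx
      simp only [Con.mention, Finset.mem_singleton] at hx
      subst hx
      exact Set.Definable.mono hs (Set.subset_univ _)
  | heir n m χ e =>
      intro x hx
      simp only [Con.mention, Finset.mem_image, Finset.mem_univ, true_and] at hx
      obtain ⟨j, rfl⟩ := hx
      exact defFam_LM_mem_Dset_univ (χ j) e
  | target =>
      intro x hx
      simp only [Con.mention, Finset.mem_singleton] at hx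
      subst hx
      exact hs₀

/-- Canonical presentation of a globally definable set. -/
noncomputable def canon (p : {s : Set (α → U) // s ∈ Dset L (Set.univ : Set U) α}) :
    Σ k : ℕ, (L.Formula (α ⊕ Fin k)) × (Fin k → U) :=
  ⟨(exists_defFam_of_mem_Dset p.2).choose,
    ((exists_defFam_of_mem_Dset p.2).choose_spec).choose,
    (((exists_defFam_of_mem_Dset p.2).choose_spec).choose_spec).choose⟩

theorem canon_spec (p : {s : Set (α → U) // s ∈ Dset L (Set.univ : Set U) α}) :
    (p : Set (α → U)) = defFam (canon p).2.1 (canon p).2.2 :=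
  ((((exists_defFam_of_mem_Dset p.2).choose_spec).choose_spec).choose_spec).2

/-- Canonical presentation of an `M`-definable set. -/
noncomputable def canonM (p : {s : Set (α → U) // s ∈ Dset L Mset α}) :
    (L[[Mset]]).Formula α :=
  (p.2 : Mset.Definable L p.1).choose

theorem canonM_spec (p : {s : Set (α → U) // s ∈ Dset L Mset α}) :
    (p : Set (α → U)) = setOf (canonM p).Realize :=
  (p.2 : Mset.Definable L p.1).choose_spec

end ConSec

section FIPdata

variable {L : FirstOrder.Language.{u, u}} {U : Type u} [L.Structure U] {α : Type u}
    {Mset : Set U}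
variable (t : Finset (Con L U α Mset)) {m : ℕ} (φ : L.Formula (α ⊕ Fin m)) (b : Fin m → U)

/-- The support: all sets mentioned by the constraints of `t`. -/
noncomputable def FSupp : Finset (Set (α → U)) := t.biUnion (Con.mention (defFam φ b))

theorem FSupp_definable {s : Set (α → U)} (hs : s ∈ FSupp t φ b) :
    s ∈ Dset L (Set.univ : Set U) α := by
  rw [FSupp, Finset.mem_biUnion] at hs
  obtain ⟨i, hi, hsi⟩ := hs
  exact Con.mention_definable (defFam_mem_Dset φ b (fun _ => trivial)) i s hsi

/-- The extra variable block. -/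
@[reducible] noncomputable def FZB : Type u :=
  (Σ p : {s : Set (α → U) // s ∈ FSupp t φ b},
    Fin (canon (⟨p.1, FSupp_definable t φ b p.2⟩ :
      {s : Set (α → U) // s ∈ Dset L (Set.univ : Set U) α})).1) ⊕
  (Σ q : {i : Con L U α Mset // i ∈ t}, Fin q.1.earity)

instance FZB_finite : Finite (FZB t φ b) := by
  haveI : Fintype {s : Set (α → U) // s ∈ FSupp t φ b} := FinsetCoe.fintype _
  haveI : Fintype {i : Con L U α Mset // i ∈ t} := FinsetCoe.fintype _
  infer_instance

/-- The full variable block. -/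
@[reducible] noncomputable def FV : Type u := Fin m ⊕ FZB t φ b

/-- The canonical presentation formula of a mentioned set, relabeled into the full
variable block. -/
noncomputable def pf (p : {s : Set (α → U) // s ∈ FSupp t φ b}) :
    (L[[Mset]]).Formula (α ⊕ FV t φ b) :=
  ((L.lhomWithConstants Mset).onFormula
      (canon (⟨p.1, FSupp_definable t φ b p.2⟩ :
        {s : Set (α → U) // s ∈ Dset L (Set.univ : Set U) α})).2.1).relabel
    (Sum.map id (fun v => Sum.inr (Sum.inl ⟨p, v⟩)))

theorem realize_pf (p : {s : Set (α → U) // s ∈ FSupp t φ b}) (a : α → U)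
    (w : FV t φ b → U) :
    Formula.Realize (pf t φ b p) (Sum.elim a w) ↔
      a ∈ defFam (canon (⟨p.1, FSupp_definable t φ b p.2⟩ :
          {s : Set (α → U) // s ∈ Dset L (Set.univ : Set U) α})).2.1
        (fun v => w (Sum.inr (Sum.inl ⟨p, v⟩))) := by
  rw [pf, Formula.realize_relabel, mem_defFam]
  have hfun : (Sum.elim a w) ∘ (Sum.map id (fun v => Sum.inr (Sum.inl ⟨p, v⟩))) =
      Sum.elim a (fun v => w (Sum.inr (Sum.inl ⟨p, v⟩))) := by
    funext x
    rcases x with a' | v <;> rfl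
  rw [hfun]
  exact LHom.realize_onFormula _ _

variable [Nonempty U]

/-- `∀ x (F(x,·) ↔ G(x,·))` as a formula in the parameter variables. -/
noncomputable def eqf {β : Type u} (F G : (L[[Mset]]).Formula (α ⊕ β)) :
    (L[[Mset]]).Formula β :=
  allA (F.iff G)

theorem realize_eqf {β : Type u} (F G : (L[[Mset]]).Formula (α ⊕ β)) (w : β → U) :
    (eqf F G).Realize w ↔
      ∀ a : α → U, (F.Realize (Sum.elim a w) ↔ G.Realize (Sum.elim a w)) := by
  rw [eqf, realize_allA]
  constructor
  · intro h a
    have := h a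
    rwa [Formula.realize_iff] at this
  · intro h a
    rw [Formula.realize_iff]
    exact h a

/-- The conditions of a single constraint. -/
noncomputable def FConds : (i : Con L U α Mset) → i ∈ t →
    List ((L[[Mset]]).Formula (FV t φ b))
  | .add s t' hs ht' hd => fun hi =>
      [eqf (pf t φ b ⟨s ∪ t', Finset.mem_biUnion.mpr ⟨Con.add s t' hs ht' hd, hi,
          by simp [Con.mention]⟩⟩)
        ((pf t φ b ⟨s, Finset.mem_biUnion.mpr ⟨Con.add s t' hs ht' hd, hi,
          by simp [Con.mention]⟩⟩) ⊔
         (pf t φ b ⟨t', Finset.mem_biUnion.mpr ⟨Con.add s t' hs ht' hd, hi,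
          by simp [Con.mention]⟩⟩)),
       eqf ((pf t φ b ⟨s, Finset.mem_biUnion.mpr ⟨Con.add s t' hs ht' hd, hi,
          by simp [Con.mention]⟩⟩) ⊓
         (pf t φ b ⟨t', Finset.mem_biUnion.mpr ⟨Con.add s t' hs ht' hd, hi,
          by simp [Con.mention]⟩⟩)) ⊥]
  | .extend s hs => fun hi =>
      [eqf (pf t φ b ⟨s, Finset.mem_biUnion.mpr ⟨Con.extend s hs, hi,
          by simp [Con.mention]⟩⟩)
        ((canonM ⟨s, hs⟩).relabel Sum.inl)]
  | .heir n m' χ e => fun hi =>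
      List.ofFn (fun j : Fin n =>
        eqf (pf t φ b ⟨defFam (χ j) e, Finset.mem_biUnion.mpr ⟨Con.heir n m' χ e, hi,
            by simp only [Con.mention, Finset.mem_image, Finset.mem_univ, true_and]
               exact ⟨j, rfl⟩⟩⟩)
          ((χ j).relabel (Sum.map id (fun v : Fin m' =>
            Sum.inr (Sum.inr ⟨⟨Con.heir n m' χ e, hi⟩, v⟩)))))
  | .target => fun hi =>
      [eqf (pf t φ b ⟨defFam φ b, Finset.mem_biUnion.mpr ⟨Con.target, hi,
          by simp [Con.mention]⟩⟩)
        (((L.lhomWithConstants Mset).onFormula φ).relabel (Sum.map id Sum.inl))]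

/-- The full condition formula, and its existential closure in the parameter block. -/
noncomputable def FPsi : (L[[Mset]]).Formula (FV t φ b) :=
  lconj (t.attach.toList.flatMap (fun q => FConds t φ b q.1 q.2))

noncomputable def Fpsi : (L[[Mset]]).Formula (Fin m) :=
  Formula.iExs (FZB t φ b) (FPsi t φ b)

theorem realize_Fpsi (w : Fin m → U) :
    (Fpsi t φ b).Realize w ↔ ∃ z : FZB t φ b → U,
      Formula.Realize (M := U) (FPsi t φ b) (Sum.elim w z) := by
  rw [Fpsi, Formula.realize_iExs]

end FIPdata

section Lemma3

variable {L : FirstOrder.Language.{u, u}} {U : Type u} [L.Structure U] {α : Type u}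
    {Mset : Set U}

/-- If a global heir of `μ` is the unique one, then the "less than" continuity clause of
definability holds for it. -/
theorem unique_heir_lt_clause
    (hM : IsElemSubset L U Mset)
    (μ : KMeasure L Mset α)
    (ν : KMeasure L (Set.univ : Set U) α)
    (hext : agreeOn (Dset L Mset α) ν.val μ.val)
    (hheir : IsHeir L ν.val Mset (Set.univ : Set U))
    (huniq : ∀ ν₁ ν₂ : KMeasure L (Set.univ : Set U) α,
        agreeOn (Dset L Mset α) ν₁.val μ.val → IsHeir L ν₁.val Mset (Set.univ : Set U) →
        agreeOn (Dset L Mset α) ν₂.val μ.val → IsHeir L ν₂.val Mset (Set.univ : Set U) →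
        agreeOn (Dset L (Set.univ : Set U) α) ν₁.val ν₂.val)
    (m : ℕ) (φ : L.Formula (α ⊕ Fin m)) (r : ℝ) (b : Fin m → U)
    (hb : ν.val (defFam φ b) < r) :
    ∃ ψ : (L[[Mset]]).Formula (Fin m), ψ.Realize b ∧
      ∀ b' : Fin m → U, ψ.Realize b' → ν.val (defFam φ b') < r := by
  haveI : Nonempty U := ⟨hM.1.choose⟩
  by_contra hcon
  push_neg at hcon
  have hs₀ : defFam φ b ∈ Dset L (Set.univ : Set U) α :=
    defFam_mem_Dset φ b fun _ => trivial
  have hmain : ((Set.pi Set.univ (fun _ : Set (α → U) => Set.Icc (0:ℝ) 1)) ∩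
      ⋂ i : Con L U α Mset, Con.Z μ.val (defFam φ b) r i).Nonempty := by
    refine (isCompact_univ_pi (fun _ => isCompact_Icc)).inter_iInter_nonempty _
      (fun i => Con.Z_closed μ.val (defFam φ b) r i) ?_
    intro t
    -- the witness for the actual parameters
    have hrelmap : ∀ {k : ℕ} (ζ : (L[[Mset]]).Formula (α ⊕ Fin k)) (emb : Fin k → FV t φ b)
        (a : α → U) (w : FV t φ b → U),
        Formula.Realize (M := U) (ζ.relabel (Sum.map id emb)) (Sum.elim a w) ↔
          ζ.Realize (Sum.elim a (w ∘ emb)) := by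
      intro k ζ emb a w
      rw [Formula.realize_relabel]
      apply iff_of_eq; congr 1
      funext x; rcases x with x | v <;> rfl
    have hrealize_act : Formula.Realize (M := U) (FPsi t φ b)
        (Sum.elim b (Sum.elim
          (fun x => (canon ⟨x.1.1, FSupp_definable t φ b x.1.2⟩).2.2 x.2)
          (fun x => x.1.1.epar x.2))) := by
      set w : FV t φ b → U := Sum.elim b (Sum.elim
          (fun x => (canon ⟨x.1.1, FSupp_definable t φ b x.1.2⟩).2.2 x.2)
          (fun x => x.1.1.epar x.2)) with hw
      have hpf_act : ∀ (p : {s : Set (α → U) // s ∈ FSupp t φ b}) (a : α → U),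
          Formula.Realize (M := U) (pf t φ b p) (Sum.elim a w) ↔ a ∈ p.1 := by
        intro p a
        rw [realize_pf]
        have h2 : (fun v => w (Sum.inr (Sum.inl ⟨p, v⟩))) =
            (canon ⟨p.1, FSupp_definable t φ b p.2⟩).2.2 := by
          funext v; rw [hw]; rfl
        rw [h2]
        rw [show defFam (canon ⟨p.1, FSupp_definable t φ b p.2⟩).2.1
            (canon ⟨p.1, FSupp_definable t φ b p.2⟩).2.2 = p.1 from
          (canon_spec ⟨p.1, FSupp_definable t φ b p.2⟩).symm]
      unfold FPsi
      rw [realize_lconj]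
      intro c hc
      rw [List.mem_flatMap] at hc
      obtain ⟨q, hqmem, hcq⟩ := hc
      obtain ⟨i, hi⟩ := q
      rcases i with ⟨s, t', hs, ht', hd⟩ | ⟨s, hs⟩ | ⟨n, m', χ, e⟩ | _
      · simp only [FConds, List.mem_cons, List.mem_singleton, List.not_mem_nil,
          or_false] at hcq
        rcases hcq with rfl | rfl
        · rw [realize_eqf]
          intro a
          rw [hpf_act, Formula.realize_sup, hpf_act, hpf_act]
          exact Set.mem_union a s t'
        · rw [realize_eqf]
          intro a
          rw [Formula.realize_inf, hpf_act, hpf_act]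
          simp only [Formula.realize_bot, iff_false]
          rintro ⟨h1, h2⟩
          exact Set.disjoint_left.mp hd h1 h2
      · simp only [FConds, List.mem_singleton] at hcq
        subst hcq
        rw [realize_eqf]
        intro a
        rw [hpf_act, Formula.realize_relabel, Sum.elim_comp_inl]
        have hspec' : s = setOf (Formula.Realize (M := U)
            (canonM (⟨s, hs⟩ : {s : Set (α → U) // s ∈ Dset L Mset α}))) := by
          have := canonM_spec (⟨s, hs⟩ : {s : Set (α → U) // s ∈ Dset L Mset α})
          exact this
        show a ∈ s ↔ (canonM (⟨s, hs⟩ : {s : Set (α → U) // s ∈ Dset L Mset α})).Realize a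
        conv_lhs => rw [hspec']
        exact Iff.rfl
      · simp only [FConds, List.mem_ofFn] at hcq
        obtain ⟨j, rfl⟩ := hcq
        rw [realize_eqf]
        intro a
        rw [hpf_act, hrelmap]
        have hwe : (w ∘ (fun v : Fin m' =>
            Sum.inr (Sum.inr ⟨⟨Con.heir n m' χ e, hi⟩, v⟩)) : Fin m' → U) = e := by
          funext v; rw [hw]; rfl
        rw [hwe]
        exact Iff.rfl
      · simp only [FConds, List.mem_singleton] at hcq
        subst hcq
        rw [realize_eqf]
        intro a
        rw [hpf_act, hrelmap]
        have hwb : (w ∘ (Sum.inl : Fin m → FV t φ b)) = b := by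
          funext v; rw [hw]; rfl
        rw [hwb, show Formula.Realize (M := U) ((L.lhomWithConstants Mset).onFormula φ)
            (Sum.elim a b) ↔ φ.Realize (Sum.elim a b) from LHom.realize_onFormula _ _]
        exact Iff.rfl
    -- apply the failure of the clause to the formula `Fpsi`
    obtain ⟨b', hb'real, hb'r⟩ := hcon (Fpsi t φ b)
      ((realize_Fpsi t φ b b).mpr ⟨_, hrealize_act⟩)
    obtain ⟨z', hz'⟩ := (realize_Fpsi t φ b b').mp hb'real
    -- the moved sets and the finite-approximation measure
    classical
    set mv : {s : Set (α → U) // s ∈ FSupp t φ b} → Set (α → U) := fun p =>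
      defFam (canon ⟨p.1, FSupp_definable t φ b p.2⟩).2.1
        (fun v => z' (Sum.inl ⟨p, v⟩)) with hmv
    set gf : (Set (α → U)) → ℝ := fun s =>
      if hs : s ∈ FSupp t φ b then ν.val (mv ⟨s, hs⟩) else 0 with hgf
    have hmvD : ∀ p, mv p ∈ Dset L (Set.univ : Set U) α := fun p =>
      defFam_mem_Dset _ _ (fun _ => trivial)
    have hgf_eq : ∀ (s) (hs : s ∈ FSupp t φ b), gf s = ν.val (mv ⟨s, hs⟩) := by
      intro s hs
      simp only [hgf]
      exact dif_pos hs
    have hpf_mv : ∀ (p : {s : Set (α → U) // s ∈ FSupp t φ b}) (a : α → U),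
        Formula.Realize (M := U) (pf t φ b p) (Sum.elim a (Sum.elim b' z')) ↔ a ∈ mv p := by
      intro p a
      rw [realize_pf]
      exact Iff.rfl
    have hz'conds : ∀ (i : Con L U α Mset) (hi : i ∈ t), ∀ c ∈ FConds t φ b i hi,
        Formula.Realize (M := U) c (Sum.elim b' z') := by
      intro i hi c hc
      unfold FPsi at hz'
      rw [realize_lconj] at hz'
      exact hz' c (List.mem_flatMap.mpr ⟨⟨i, hi⟩,
        Finset.mem_toList.mpr (Finset.mem_attach _ _), hc⟩)
    refine ⟨gf, ?_, ?_⟩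
    · intro s _
      simp only [hgf]
      by_cases hs : s ∈ FSupp t φ b
      · rw [dif_pos hs]
        exact ν.val_mem_Icc (hmvD _)
      · rw [dif_neg hs]
        exact ⟨le_refl 0, by norm_num⟩
    · rw [Set.mem_iInter₂]
      intro i hi
      rcases i with ⟨s, t', hs, ht', hd⟩ | ⟨s, hs⟩ | ⟨n, m', χ, e⟩ | _
      · -- additivity constraint
        have hcs := hz'conds (Con.add s t' hs ht' hd) hi
        simp only [FConds] at hcs
        have hc1 := hcs _ (List.mem_cons_self)
        have hc2 := hcs _ (List.mem_cons_of_mem _ (List.mem_cons_self))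
        have hms : s ∈ FSupp t φ b :=
          Finset.mem_biUnion.mpr ⟨Con.add s t' hs ht' hd, hi, by simp [Con.mention]⟩
        have hmt : t' ∈ FSupp t φ b :=
          Finset.mem_biUnion.mpr ⟨Con.add s t' hs ht' hd, hi, by simp [Con.mention]⟩
        have hmst : s ∪ t' ∈ FSupp t φ b :=
          Finset.mem_biUnion.mpr ⟨Con.add s t' hs ht' hd, hi, by simp [Con.mention]⟩
        have h1 : mv ⟨s ∪ t', hmst⟩ = mv ⟨s, hms⟩ ∪ mv ⟨t', hmt⟩ := by
          ext a
          have h2 := (realize_eqf _ _ _).mp hc1 a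
          rw [hpf_mv, Formula.realize_sup, hpf_mv, hpf_mv] at h2
          rw [Set.mem_union]
          exact h2
        have h2 : Disjoint (mv ⟨s, hms⟩) (mv ⟨t', hmt⟩) := by
          rw [Set.disjoint_left]
          intro a ha1 ha2
          have h3 := (realize_eqf _ _ _).mp hc2 a
          rw [Formula.realize_inf, hpf_mv, hpf_mv] at h3
          exact absurd (h3.mp ⟨ha1, ha2⟩) (by simp)
        show gf (s ∪ t') = gf s + gf t'
        rw [hgf_eq _ hms, hgf_eq _ hmt, hgf_eq _ hmst, h1]
        exact ν.additive _ _ (hmvD _) (hmvD _) h2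
      · -- extension constraint
        have hcs := hz'conds (Con.extend s hs) hi
        simp only [FConds] at hcs
        have hc1 := hcs _ (List.mem_cons_self)
        have hms : s ∈ FSupp t φ b :=
          Finset.mem_biUnion.mpr ⟨Con.extend s hs, hi, by simp [Con.mention]⟩
        have h1 : mv ⟨s, hms⟩ = s := by
          ext a
          have h2 := (realize_eqf _ _ _).mp hc1 a
          rw [hpf_mv, Formula.realize_relabel, Sum.elim_comp_inl] at h2
          have hspec' : s = setOf (Formula.Realize (M := U)
              (canonM (⟨s, hs⟩ : {s : Set (α → U) // s ∈ Dset L Mset α}))) := by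
            have := canonM_spec (⟨s, hs⟩ : {s : Set (α → U) // s ∈ Dset L Mset α})
            exact this
          rw [h2]
          show (canonM (⟨s, hs⟩ : {s : Set (α → U) // s ∈ Dset L Mset α})).Realize a ↔ a ∈ s
          conv_rhs => rw [hspec']
          exact Iff.rfl
        show gf s = μ.val s
        rw [hgf_eq _ hms, h1]
        exact hext s hs
      · -- heir constraint
        have hcs := hz'conds (Con.heir n m' χ e) hi
        simp only [FConds] at hcs
        have hmemj : ∀ j : Fin n, defFam (χ j) e ∈ FSupp t φ b := fun j =>
          Finset.mem_biUnion.mpr ⟨Con.heir n m' χ e, hi,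
            by simp only [Con.mention, Finset.mem_image, Finset.mem_univ, true_and]
               exact ⟨j, rfl⟩⟩
        have hmvj : ∀ j : Fin n, mv ⟨defFam (χ j) e, hmemj j⟩ =
            defFam (χ j) (fun v => z' (Sum.inr ⟨⟨Con.heir n m' χ e, hi⟩, v⟩)) := by
          intro j
          ext a
          have hcj := hcs _ (by rw [List.mem_ofFn]; exact ⟨j, rfl⟩)
          have h2 := (realize_eqf _ _ _).mp hcj a
          rw [hpf_mv, hrelmap] at h2
          rw [h2]
          exact Iff.rfl
        show (fun j => gf (defFam (χ j) e)) ∈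
          closure {v : Fin n → ℝ | ∃ d : Fin m' → U, (∀ j, d j ∈ Mset) ∧
            v = fun j => μ.val (defFam (χ j) d)}
        rw [Metric.mem_closure_iff]
        intro δ hδ
        obtain ⟨d, hdM, hdcl⟩ := hheir δ hδ n m' χ
          (fun v => z' (Sum.inr ⟨⟨Con.heir n m' χ e, hi⟩, v⟩)) (fun _ => trivial)
        refine ⟨fun j => μ.val (defFam (χ j) d), ⟨d, hdM, rfl⟩, ?_⟩
        rw [dist_pi_lt_iff hδ]
        intro j
        rw [Real.dist_eq, hgf_eq _ (hmemj j), hmvj j]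
        have h3 : ν.val (defFam (χ j) d) = μ.val (defFam (χ j) d) :=
          hext _ (defFam_LM_mem_Dset_Mset (χ j) d hdM)
        rw [← h3]
        exact hdcl j
      · -- target constraint
        have hcs := hz'conds Con.target hi
        simp only [FConds] at hcs
        have hc1 := hcs _ (List.mem_cons_self)
        have hms : defFam φ b ∈ FSupp t φ b :=
          Finset.mem_biUnion.mpr ⟨Con.target, hi, by simp [Con.mention]⟩
        have h1 : mv ⟨defFam φ b, hms⟩ = defFam φ b' := by
          ext a
          have h2 := (realize_eqf _ _ _).mp hc1 a
          rw [hpf_mv, hrelmap] at h2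
          rw [h2]
          have hbb : ((Sum.elim b' z') ∘ (Sum.inl : Fin m → FV t φ b)) = b' := rfl
          rw [hbb, mem_defFam]
          exact LHom.realize_onFormula _ _
        show r ≤ gf (defFam φ b)
        rw [hgf_eq _ hms, h1]
        exact hb'r
  -- extract the global measure from the compactness argument
  obtain ⟨g, hgK, hgZ'⟩ := hmain
  rw [Set.mem_iInter] at hgZ'
  have hgIcc : ∀ s, g s ∈ Set.Icc (0:ℝ) 1 := fun s => hgK s (Set.mem_univ s)
  have hgext : ∀ s, s ∈ Dset L Mset α → g s = μ.val s := fun s hs =>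
    hgZ' (Con.extend s hs)
  set ν'' : KMeasure L (Set.univ : Set U) α :=
    { val := g
      nonneg := fun s _ => (hgIcc s).1
      isProb := by
        have h1 := hgext Set.univ Set.definable_univ
        rw [h1, μ.isProb]
      additive := fun s t hs ht hd => hgZ' (Con.add s t hs ht hd) } with hν''
  have hext'' : agreeOn (Dset L Mset α) ν''.val μ.val := fun s hs => hgext s hs
  have hheir'' : IsHeir L ν''.val Mset (Set.univ : Set U) := by
    intro ε hε n m' χ e _
    have hz : (fun i => g (defFam (χ i) e)) ∈
        closure {v : Fin n → ℝ | ∃ d : Fin m' → U, (∀ j, d j ∈ Mset) ∧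
          v = fun i => μ.val (defFam (χ i) d)} := hgZ' (Con.heir n m' χ e)
    rw [Metric.mem_closure_iff] at hz
    obtain ⟨v, hvS, hvd⟩ := hz ε hε
    obtain ⟨d, hdM, rfl⟩ := hvS
    refine ⟨d, hdM, fun i => ?_⟩
    have h1 : dist (g (defFam (χ i) e)) (μ.val (defFam (χ i) d)) ≤
        dist (fun i => g (defFam (χ i) e)) (fun i => μ.val (defFam (χ i) d)) :=
      dist_le_pi_dist (fun j => g (defFam (χ j) e)) (fun j => μ.val (defFam (χ j) d)) i
    have h2 : ν''.val (defFam (χ i) d) = μ.val (defFam (χ i) d) :=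
      hgext _ (defFam_LM_mem_Dset_Mset (χ i) d hdM)
    show |ν''.val (defFam (χ i) e) - ν''.val (defFam (χ i) d)| < ε
    rw [h2]
    calc |g (defFam (χ i) e) - μ.val (defFam (χ i) d)|
        = dist (g (defFam (χ i) e)) (μ.val (defFam (χ i) d)) := (Real.dist_eq _ _).symm
      _ ≤ _ := h1
      _ < ε := hvd
  have hagree := huniq ν'' ν hext'' hheir'' hext hheir
  have h1 := hagree _ hs₀
  have h2 : r ≤ g (defFam φ b) := hgZ' Con.target
  have h3 : g (defFam φ b) = ν.val (defFam φ b) := h1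
  rw [h3] at h2
  linarith

end Lemma3

/-- Let `μ` be a Keisler measure over a small model `M`.  Then `μ`
extends to a global `M`-definable Keisler measure if and only if `μ` has a unique global
heir over `M`. -/
theorem statement_2
    (L : FirstOrder.Language.{u, u}) (U : Type u) [L.Structure U]
    (κ : Cardinal.{u}) (hMon : IsMonster L U κ)
    (Mset : Set U) (hM : IsElemSubset L U Mset) (hMsmall : SmallSet L κ Mset)
    (α : Type u) (μ : KMeasure L Mset α) :
    (∃ ν : KMeasure L (Set.univ : Set U) α,
        agreeOn (Dset L Mset α) ν.val μ.val ∧ DefinableOver L ν.val Mset) ↔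
      ((∃ ν : KMeasure L (Set.univ : Set U) α,
          agreeOn (Dset L Mset α) ν.val μ.val ∧ IsHeir L ν.val Mset (Set.univ : Set U)) ∧
        ∀ ν₁ ν₂ : KMeasure L (Set.univ : Set U) α,
          agreeOn (Dset L Mset α) ν₁.val μ.val → IsHeir L ν₁.val Mset (Set.univ : Set U) →
          agreeOn (Dset L Mset α) ν₂.val μ.val → IsHeir L ν₂.val Mset (Set.univ : Set U) →
          agreeOn (Dset L (Set.univ : Set U) α) ν₁.val ν₂.val) := by
  constructor
  · rintro ⟨ν, hext, hdef⟩
    refine ⟨⟨ν, hext, heir_of_definable hM ν hdef⟩, ?_⟩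
    intro ν₁ ν₂ h1e h1h h2e h2h s hs
    rw [heir_agrees_definable μ ν hext hdef ν₁ h1e h1h s hs,
        heir_agrees_definable μ ν hext hdef ν₂ h2e h2h s hs]
  · rintro ⟨⟨ν, hext, hheir⟩, huniq⟩
    have hlt := unique_heir_lt_clause hM μ ν hext hheir huniq
    have hcompl : ∀ (k : ℕ) (θ : L.Formula (α ⊕ Fin k)) (e : Fin k → U),
        ν.val (defFam θ.not e) = 1 - ν.val (defFam θ e) := by
      intro k θ e
      rw [defFam_not]
      exact ν.val_compl (defFam_mem_Dset θ e (fun _ => trivial))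
        (Set.Definable.compl (defFam_mem_Dset θ e (fun _ => trivial)))
    have hgt : ∀ (k : ℕ) (θ : L.Formula (α ⊕ Fin k)) (r : ℝ) (b : Fin k → U),
        r < ν.val (defFam θ b) →
        ∃ ψ : (L[[Mset]]).Formula (Fin k), ψ.Realize b ∧
          ∀ b', ψ.Realize b' → r < ν.val (defFam θ b') := by
      intro k θ r b hrb
      obtain ⟨ψ, hψb, hψ⟩ := hlt k θ.not (1 - r) b (by rw [hcompl]; linarith)
      refine ⟨ψ, hψb, fun b' hb' => ?_⟩
      have h2 := hψ b' hb'
      rw [hcompl] at h2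
      linarith
    have hinv : InvariantOn L ν.val Mset := by
      have key : ∀ (k : ℕ) (χ : (L[[Mset]]).Formula (α ⊕ Fin k)) (b b' : Fin k → U),
          SameTypeOver L Mset b b' → ν.val (defFam χ b') ≤ ν.val (defFam χ b) := by
        intro k χ b b' hst
        by_contra hlt'
        push_neg at hlt'
        obtain ⟨k', θ, c, hc, hrep⟩ := exists_L_formula_of_LM_formula (L := L) χ
        set r := (ν.val (defFam χ b) + ν.val (defFam χ b')) / 2 with hr
        obtain ⟨ψ, hψb, hψ⟩ := hlt (k + k') θ r ((Sum.elim b c) ∘ ⇑finSumFinEquiv.symm)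
          (by rw [← hrep b, hr]; linarith)
        have hψcb : (substFin (L := L) ψ c hc).Realize b := by
          rw [realize_substFin]; exact hψb
        have hψcb' : (substFin (L := L) ψ c hc).Realize b' :=
          (hst (substFin (L := L) ψ c hc)).mp hψcb
        rw [realize_substFin] at hψcb'
        have h3 := hψ _ hψcb'
        rw [← hrep b', hr] at h3
        linarith
      intro k χ b b' hst
      have hst' : SameTypeOver L Mset b' b := fun ζ => (hst ζ).symm
      exact le_antisymm (key k χ b' b hst') (key k χ b b' hst)
    exact ⟨ν, hext, hinv, fun k θ r => ⟨hlt k θ r, hgt k θ r⟩⟩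

end KeislerPaper
end

section
/- Let μ(x) and ν(y) be smooth Keisler measures over a small model M. Then their unique separated amalgam μ × ν (in variables xy) is smooth over M. -/
namespace KeislerPaper

open FirstOrder FirstOrder.Language Set MeasureTheory
open scoped ENNReal Classical

universe u v

section AbstractExtension

variable {X : Type u} {𝒜 : Set (Set X)}

lemma IsBoolAlg.empty_mem (hA : IsBoolAlg 𝒜) : (∅ : Set X) ∈ 𝒜 := by
  simpa using hA.2.1 _ hA.1

lemma IsBoolAlg.union_mem (hA : IsBoolAlg 𝒜) {s t : Set X} (hs : s ∈ 𝒜) (ht : t ∈ 𝒜) :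
    s ∪ t ∈ 𝒜 := by
  have h := hA.2.1 _ (hA.2.2 _ (hA.2.1 _ hs) _ (hA.2.1 _ ht))
  rwa [← Set.compl_union, compl_compl] at h

lemma IsBoolAlg.biUnion_mem (hA : IsBoolAlg 𝒜) {ι : Type*} (G : Finset ι)
    (f : ι → Set X) (hf : ∀ i ∈ G, f i ∈ 𝒜) : (⋃ i ∈ G, f i) ∈ 𝒜 := by
  classical
  induction G using Finset.induction_on with
  | empty => simpa using hA.empty_mem
  | @insert a G ha ih =>
    rw [Finset.set_biUnion_insert]
    exact hA.union_mem (hf a (Finset.mem_insert_self a G))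
      (ih fun i hi => hf i (Finset.mem_insert_of_mem hi))

lemma IsBoolAlg.biInter_mem (hA : IsBoolAlg 𝒜) {ι : Type*} (G : Finset ι)
    (f : ι → Set X) (hf : ∀ i ∈ G, f i ∈ 𝒜) : (⋂ i ∈ G, f i) ∈ 𝒜 := by
  classical
  induction G using Finset.induction_on with
  | empty => simpa using hA.1
  | @insert a G ha ih =>
    rw [Finset.set_biInter_insert]
    exact hA.2.2 _ (hf a (Finset.mem_insert_self a G)) _
      (ih fun i hi => hf i (Finset.mem_insert_of_mem hi))

variable {g : Set X → ℝ}

lemma g_empty (hA : IsBoolAlg 𝒜)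
    (hadd : ∀ s t : Set X, s ∈ 𝒜 → t ∈ 𝒜 → Disjoint s t → g (s ∪ t) = g s + g t) :
    g ∅ = 0 := by
  have h := hadd ∅ ∅ hA.empty_mem hA.empty_mem (by simp)
  simp only [Set.union_empty] at h
  linarith

lemma g_sum (hA : IsBoolAlg 𝒜)
    (hadd : ∀ s t : Set X, s ∈ 𝒜 → t ∈ 𝒜 → Disjoint s t → g (s ∪ t) = g s + g t)
    {ι : Type*} (G : Finset ι) (f : ι → Set X)
    (hf : ∀ i ∈ G, f i ∈ 𝒜)
    (hdisj : ∀ i ∈ G, ∀ j ∈ G, i ≠ j → Disjoint (f i) (f j)) :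
    g (⋃ i ∈ G, f i) = ∑ i ∈ G, g (f i) := by
  classical
  induction G using Finset.induction_on with
  | empty => simpa using g_empty hA hadd
  | @insert a G ha ih =>
    rw [Finset.set_biUnion_insert, Finset.sum_insert ha,
      hadd _ _ (hf a (Finset.mem_insert_self a G))
        (hA.biUnion_mem G f fun i hi => hf i (Finset.mem_insert_of_mem hi))
        (Set.disjoint_iUnion₂_right.2 fun i hi =>
          hdisj a (Finset.mem_insert_self a G) i (Finset.mem_insert_of_mem hi)
            (fun h => ha (h ▸ hi))),
      ih (fun i hi => hf i (Finset.mem_insert_of_mem hi))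
        (fun i hi j hj hij =>
          hdisj i (Finset.mem_insert_of_mem hi) j (Finset.mem_insert_of_mem hj) hij)]

lemma g_mono (hA : IsBoolAlg 𝒜)
    (hadd : ∀ s t : Set X, s ∈ 𝒜 → t ∈ 𝒜 → Disjoint s t → g (s ∪ t) = g s + g t)
    (h0 : ∀ s ∈ 𝒜, 0 ≤ g s) {s t : Set X} (hs : s ∈ 𝒜) (ht : t ∈ 𝒜)
    (hsub : s ⊆ t) : g s ≤ g t := by
  have hmem : t ∩ sᶜ ∈ 𝒜 := hA.2.2 _ ht _ (hA.2.1 _ hs)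
  have hd : Disjoint s (t ∩ sᶜ) := by
    rw [Set.disjoint_left]; intro x hx; simp [hx]
  have hrep : t = s ∪ (t ∩ sᶜ) := by
    ext x
    simp only [Set.mem_union, Set.mem_inter_iff, Set.mem_compl_iff]
    constructor
    · intro h; by_cases hx : x ∈ s
      · exact Or.inl hx
      · exact Or.inr ⟨h, hx⟩
    · rintro (h | h)
      · exact hsub h
      · exact h.1
  have := hadd s (t ∩ sᶜ) hs hmem hd
  rw [← hrep] at this
  have := h0 _ hmem
  linarith

end AbstractExtension

section Cells
variable {X : Type u} (𝒜 : Set (Set X))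

noncomputable def cellOf (F G : Finset ↥𝒜) : Set X :=
  (⋂ a ∈ G, (a : Set X)) ∩ (⋂ a ∈ F \ G, ((a : Set X))ᶜ)

noncomputable def sigOf (F : Finset ↥𝒜) (x : X) : Finset ↥𝒜 :=
  F.filter (fun a => x ∈ (a : Set X))

variable {𝒜}

lemma mem_cellOf {F G : Finset ↥𝒜} {x : X} :
    x ∈ cellOf 𝒜 F G ↔ (∀ a ∈ G, x ∈ (a : Set X)) ∧ ∀ a ∈ F, a ∉ G → x ∉ (a : Set X) := by
  simp only [cellOf, Set.mem_inter_iff, Set.mem_iInter, Set.mem_compl_iff, Finset.mem_sdiff]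
  tauto

lemma cellOf_mem_alg (hA : IsBoolAlg 𝒜) (F G : Finset ↥𝒜) : cellOf 𝒜 F G ∈ 𝒜 :=
  hA.2.2 _ (hA.biInter_mem G _ fun a _ => a.2) _
    (hA.biInter_mem (F \ G) _ fun a _ => hA.2.1 _ a.2)

lemma sigOf_subset {F : Finset ↥𝒜} {x : X} : sigOf 𝒜 F x ⊆ F := Finset.filter_subset _ _

lemma mem_cellOf_sigOf {F : Finset ↥𝒜} (x : X) : x ∈ cellOf 𝒜 F (sigOf 𝒜 F x) := by
  rw [mem_cellOf]
  constructor
  · intro a ha; exact (Finset.mem_filter.mp ha).2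
  · intro a haF haG hx; exact haG (Finset.mem_filter.mpr ⟨haF, hx⟩)

lemma cellOf_subset_of_mem {F G : Finset ↥𝒜} {b : ↥𝒜} (hb : b ∈ G) :
    cellOf 𝒜 F G ⊆ (b : Set X) := fun _ hx => (mem_cellOf.mp hx).1 b hb

lemma cellOf_subset_compl {F G : Finset ↥𝒜} {b : ↥𝒜} (hbF : b ∈ F) (hbG : b ∉ G) :
    cellOf 𝒜 F G ⊆ ((b : Set X))ᶜ := fun _ hx => (mem_cellOf.mp hx).2 b hbF hbG

lemma cellOf_disjoint {F G G' : Finset ↥𝒜} (hG : G ⊆ F) (hG' : G' ⊆ F) (hne : G ≠ G') :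
    Disjoint (cellOf 𝒜 F G) (cellOf 𝒜 F G') := by
  have : ¬(G ⊆ G' ∧ G' ⊆ G) := fun ⟨h1, h2⟩ => hne (Finset.Subset.antisymm h1 h2)
  rcases not_and_or.mp this with h | h
  · obtain ⟨b, hbG, hbG'⟩ := Finset.not_subset.mp h
    exact Disjoint.mono (cellOf_subset_of_mem hbG)
      (cellOf_subset_compl (hG hbG) hbG') disjoint_compl_right
  · obtain ⟨b, hbG', hbG⟩ := Finset.not_subset.mp h
    exact Disjoint.mono (cellOf_subset_compl (hG' hbG') hbG)
      (cellOf_subset_of_mem hbG') disjoint_compl_left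

lemma cellOf_cover (F : Finset ↥𝒜) : ⋃ G ∈ F.powerset, cellOf 𝒜 F G = Set.univ := by
  apply Set.eq_univ_of_forall
  intro x
  exact Set.mem_biUnion (Finset.mem_powerset.mpr sigOf_subset) (mem_cellOf_sigOf x)

noncomputable def selOf [Nonempty X] (e : Set X) (F G : Finset ↥𝒜) : X :=
  if h : (cellOf 𝒜 F G ∩ e).Nonempty then h.choose
  else if h2 : (cellOf 𝒜 F G).Nonempty then h2.choose else Classical.arbitrary X

variable [Nonempty X]

lemma selOf_mem_cell {e : Set X} {F G : Finset ↥𝒜} (h : (cellOf 𝒜 F G).Nonempty) :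
    selOf e F G ∈ cellOf 𝒜 F G := by
  unfold selOf
  by_cases h1 : (cellOf 𝒜 F G ∩ e).Nonempty
  · rw [dif_pos h1]; exact h1.choose_spec.1
  · rw [dif_neg h1, dif_pos h]; exact h.choose_spec

lemma selOf_mem_e {e : Set X} {F G : Finset ↥𝒜} (h : (cellOf 𝒜 F G ∩ e).Nonempty) :
    selOf e F G ∈ e := by
  unfold selOf
  rw [dif_pos h]
  exact h.choose_spec.2

lemma selOf_mem_inter {e : Set X} {F G : Finset ↥𝒜} (hc : (cellOf 𝒜 F G).Nonempty)
    (he : selOf e F G ∈ e) : (cellOf 𝒜 F G ∩ e).Nonempty :=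
  ⟨selOf e F G, selOf_mem_cell hc, he⟩

end Cells

section Disc
variable {X : Type u} {𝒜 : Set (Set X)} [Nonempty X]

noncomputable def disc (𝒜 : Set (Set X)) [Nonempty X] (g : Set X → ℝ) (e : Set X)
    (F : Finset ↥𝒜) (s : Set X) : ℝ :=
  ∑ G ∈ F.powerset, if selOf e F G ∈ s then g (cellOf 𝒜 F G) else 0

variable {g : Set X → ℝ}

lemma disc_nonneg (hA : IsBoolAlg 𝒜) (h0 : ∀ s ∈ 𝒜, 0 ≤ g s) (e : Set X) (F : Finset ↥𝒜)
    (s : Set X) : 0 ≤ disc 𝒜 g e F s := by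
  refine Finset.sum_nonneg fun G _ => ?_
  split_ifs
  · exact h0 _ (cellOf_mem_alg hA F G)
  · exact le_rfl

lemma disc_mono (hA : IsBoolAlg 𝒜) (h0 : ∀ s ∈ 𝒜, 0 ≤ g s) (e : Set X) (F : Finset ↥𝒜)
    {s t : Set X} (hst : s ⊆ t) : disc 𝒜 g e F s ≤ disc 𝒜 g e F t := by
  refine Finset.sum_le_sum fun G _ => ?_
  split_ifs with hs ht
  · exact le_rfl
  · exact absurd (hst hs) ht
  · exact h0 _ (cellOf_mem_alg hA F G)
  · exact le_rfl

lemma disc_add (e : Set X) (F : Finset ↥𝒜) {s t : Set X} (hd : Disjoint s t) :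
    disc 𝒜 g e F (s ∪ t) = disc 𝒜 g e F s + disc 𝒜 g e F t := by
  rw [disc, disc, disc, ← Finset.sum_add_distrib]
  refine Finset.sum_congr rfl fun G _ => ?_
  by_cases hs : selOf e F G ∈ s
  · have hts : selOf e F G ∉ t := fun h => Set.disjoint_left.mp hd hs h
    simp [Set.mem_union, hs, hts]
  · by_cases ht : selOf e F G ∈ t <;> simp [Set.mem_union, hs, ht]

lemma disc_sum_indicator (hA : IsBoolAlg 𝒜)
    (hadd : ∀ s t : Set X, s ∈ 𝒜 → t ∈ 𝒜 → Disjoint s t → g (s ∪ t) = g s + g t)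
    {F : Finset ↥𝒜} {b : ↥𝒜} (hb : b ∈ F) :
    (∑ G ∈ F.powerset, if b ∈ G then g (cellOf 𝒜 F G) else 0) = g (b : Set X) := by
  rw [← Finset.sum_filter]
  rw [← g_sum hA hadd (F.powerset.filter (fun G => b ∈ G)) (cellOf 𝒜 F)
    (fun G _ => cellOf_mem_alg hA F G)
    (fun G hG G' hG' hne => cellOf_disjoint
      (Finset.mem_powerset.mp (Finset.mem_filter.mp hG).1)
      (Finset.mem_powerset.mp (Finset.mem_filter.mp hG').1) hne)]
  congr 1
  apply Set.Subset.antisymm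
  · exact Set.iUnion₂_subset fun G hG => cellOf_subset_of_mem (Finset.mem_filter.mp hG).2
  · intro x hx
    exact Set.mem_biUnion
      (Finset.mem_filter.mpr ⟨Finset.mem_powerset.mpr sigOf_subset,
        Finset.mem_filter.mpr ⟨hb, hx⟩⟩)
      (mem_cellOf_sigOf x)

lemma disc_univ (hA : IsBoolAlg 𝒜) (h1 : g Set.univ = 1)
    (hadd : ∀ s t : Set X, s ∈ 𝒜 → t ∈ 𝒜 → Disjoint s t → g (s ∪ t) = g s + g t)
    (e : Set X) (F : Finset ↥𝒜) : disc 𝒜 g e F Set.univ = 1 := by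
  have h : disc 𝒜 g e F Set.univ = ∑ G ∈ F.powerset, g (cellOf 𝒜 F G) :=
    Finset.sum_congr rfl fun G _ => if_pos (Set.mem_univ _)
  rw [h, ← g_sum hA hadd F.powerset (cellOf 𝒜 F) (fun G _ => cellOf_mem_alg hA F G)
    (fun G hG G' hG' hne => cellOf_disjoint (Finset.mem_powerset.mp hG)
      (Finset.mem_powerset.mp hG') hne), cellOf_cover, h1]

lemma disc_agree (hA : IsBoolAlg 𝒜)
    (hadd : ∀ s t : Set X, s ∈ 𝒜 → t ∈ 𝒜 → Disjoint s t → g (s ∪ t) = g s + g t)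
    (e : Set X) {F : Finset ↥𝒜} {b : ↥𝒜} (hb : b ∈ F) :
    disc 𝒜 g e F (b : Set X) = g (b : Set X) := by
  rw [← disc_sum_indicator hA hadd hb]
  refine Finset.sum_congr rfl fun G hG => ?_
  by_cases hne : (cellOf 𝒜 F G).Nonempty
  · have hsel := selOf_mem_cell (e := e) hne
    by_cases hbG : b ∈ G
    · rw [if_pos (cellOf_subset_of_mem hbG hsel), if_pos hbG]
    · rw [if_neg (fun h => (cellOf_subset_compl hb hbG hsel) h), if_neg hbG]
  · have hcell : cellOf 𝒜 F G = ∅ := Set.not_nonempty_iff_eq_empty.mp hne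
    rw [hcell, g_empty hA hadd]
    simp

lemma disc_le_cover (hA : IsBoolAlg 𝒜) (h0 : ∀ s ∈ 𝒜, 0 ≤ g s)
    (hadd : ∀ s t : Set X, s ∈ 𝒜 → t ∈ 𝒜 → Disjoint s t → g (s ∪ t) = g s + g t)
    {e : Set X} {F : Finset ↥𝒜} {c : ↥𝒜} (hcF : c ∈ F)
    (hec : e ⊆ (c : Set X)) : disc 𝒜 g e F e ≤ g (c : Set X) := by
  rw [← disc_sum_indicator hA hadd hcF]
  refine Finset.sum_le_sum fun G _ => ?_
  by_cases hsel : selOf e F G ∈ e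
  · rw [if_pos hsel]
    by_cases hne : (cellOf 𝒜 F G).Nonempty
    · have hcG : c ∈ G := by
        by_contra hcG
        exact (cellOf_subset_compl hcF hcG (selOf_mem_cell hne)) (hec hsel)
      rw [if_pos hcG]
    · have hcell : cellOf 𝒜 F G = ∅ := Set.not_nonempty_iff_eq_empty.mp hne
      rw [hcell, g_empty hA hadd]
      split_ifs <;> simp
  · rw [if_neg hsel]
    split_ifs
    · exact h0 _ (cellOf_mem_alg hA F G)
    · exact le_rfl

lemma disc_ge_inf (hA : IsBoolAlg 𝒜) (h0 : ∀ s ∈ 𝒜, 0 ≤ g s)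
    (hadd : ∀ s t : Set X, s ∈ 𝒜 → t ∈ 𝒜 → Disjoint s t → g (s ∪ t) = g s + g t)
    (e : Set X) (F : Finset ↥𝒜) :
    sInf (g '' {c | c ∈ 𝒜 ∧ e ⊆ c}) ≤ disc 𝒜 g e F e := by
  set P := F.powerset.filter (fun G => selOf e F G ∈ e) with hP
  have hc : (⋃ G ∈ P, cellOf 𝒜 F G) ∈ 𝒜 := hA.biUnion_mem _ _ fun G _ => cellOf_mem_alg hA F G
  have hsub : e ⊆ ⋃ G ∈ P, cellOf 𝒜 F G := by
    intro x hx
    have hmem := mem_cellOf_sigOf (𝒜 := 𝒜) (F := F) x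
    have hsel : selOf e F (sigOf 𝒜 F x) ∈ e := selOf_mem_e ⟨x, hmem, hx⟩
    exact Set.mem_biUnion
      (Finset.mem_filter.mpr ⟨Finset.mem_powerset.mpr sigOf_subset, hsel⟩) hmem
  have hval : disc 𝒜 g e F e = g (⋃ G ∈ P, cellOf 𝒜 F G) := by
    rw [disc, ← Finset.sum_filter, ← hP,
      g_sum hA hadd P (cellOf 𝒜 F) (fun G _ => cellOf_mem_alg hA F G)
        (fun G hG G' hG' hne => cellOf_disjoint
          (Finset.mem_powerset.mp (Finset.mem_filter.mp hG).1)
          (Finset.mem_powerset.mp (Finset.mem_filter.mp hG').1) hne)]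
  rw [hval]
  refine csInf_le ⟨0, ?_⟩ ⟨_, ⟨hc, hsub⟩, rfl⟩
  rintro y ⟨c, ⟨hc𝒜, _⟩, rfl⟩
  exact h0 _ hc𝒜

end Disc

theorem fam_extension {X : Type u} [Nonempty X] {𝒜 : Set (Set X)} (hA : IsBoolAlg 𝒜)
    {g : Set X → ℝ} (h0 : ∀ s ∈ 𝒜, 0 ≤ g s) (h1 : g Set.univ = 1)
    (hadd : ∀ s t : Set X, s ∈ 𝒜 → t ∈ 𝒜 → Disjoint s t → g (s ∪ t) = g s + g t)
    (e : Set X) :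
    ∃ W : Set X → ℝ, (∀ s, 0 ≤ W s) ∧ W Set.univ = 1 ∧
      (∀ s t : Set X, Disjoint s t → W (s ∪ t) = W s + W t) ∧ (∀ s ∈ 𝒜, W s = g s) ∧
      W e = sInf (g '' {c | c ∈ 𝒜 ∧ e ⊆ c}) := by
  classical
  haveI : Nonempty (Finset ↥𝒜) := ⟨∅⟩
  let 𝒰 : Ultrafilter (Finset ↥𝒜) := Ultrafilter.of Filter.atTop
  have h𝒰 : (𝒰 : Filter (Finset ↥𝒜)) ≤ Filter.atTop := Ultrafilter.of_le _
  have hbound : ∀ (s : Set X) F, disc 𝒜 g e F s ∈ Set.Icc (0:ℝ) 1 := fun s F =>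
    ⟨disc_nonneg hA h0 e F s,
      le_trans (disc_mono hA h0 e F (Set.subset_univ s)) (le_of_eq (disc_univ hA h1 hadd e F))⟩
  have hex : ∀ s : Set X, ∃ x, Filter.Tendsto (fun F => disc 𝒜 g e F s) 𝒰 (nhds x) := by
    intro s
    obtain ⟨x, -, hx⟩ := (isCompact_Icc (a := (0:ℝ)) (b := 1)).ultrafilter_le_nhds
      (𝒰.map (fun F => disc 𝒜 g e F s)) (by
        rw [Ultrafilter.coe_map, Filter.le_principal_iff]
        exact Filter.mem_map.2 (Filter.univ_mem' fun F => hbound s F))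
    refine ⟨x, ?_⟩
    rwa [Ultrafilter.coe_map] at hx
  choose W hW using hex
  refine ⟨W, ?_, ?_, ?_, ?_, ?_⟩
  · exact fun s => ge_of_tendsto' (hW s) (fun F => (hbound s F).1)
  · have huniv : (fun F => disc 𝒜 g e F Set.univ) = fun _ => (1:ℝ) :=
      funext fun F => disc_univ hA h1 hadd e F
    have := hW Set.univ
    rw [huniv] at this
    exact tendsto_nhds_unique this tendsto_const_nhds
  · intro s t hd
    have hfun : (fun F => disc 𝒜 g e F (s ∪ t))
        = fun F => disc 𝒜 g e F s + disc 𝒜 g e F t :=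
      funext fun F => disc_add e F hd
    have h2 := hW (s ∪ t)
    rw [hfun] at h2
    exact tendsto_nhds_unique h2 ((hW s).add (hW t))
  · intro s hs
    have hev : ∀ᶠ F in (𝒰 : Filter (Finset ↥𝒜)), disc 𝒜 g e F s = g s := by
      refine Filter.Eventually.filter_mono h𝒰 ?_
      refine Filter.eventually_atTop.2 ⟨{⟨s, hs⟩}, fun F hF => ?_⟩
      exact disc_agree hA hadd e (Finset.singleton_subset_iff.mp hF)
    exact tendsto_nhds_unique (hW s)
      (Filter.Tendsto.congr' (hev.mono fun F h => h.symm) tendsto_const_nhds)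
  · have hle : sInf (g '' {c | c ∈ 𝒜 ∧ e ⊆ c}) ≤ W e :=
      ge_of_tendsto' (hW e) (fun F => disc_ge_inf hA h0 hadd e F)
    have hge : W e ≤ sInf (g '' {c | c ∈ 𝒜 ∧ e ⊆ c}) := by
      refine le_csInf ⟨g Set.univ, Set.univ, ⟨hA.1, Set.subset_univ e⟩, rfl⟩ ?_
      rintro y ⟨c, ⟨hc𝒜, hce⟩, rfl⟩
      refine le_of_tendsto (hW e) ?_
      refine Filter.Eventually.filter_mono h𝒰 ?_
      refine Filter.eventually_atTop.2 ⟨{⟨c, hc𝒜⟩}, fun F hF => ?_⟩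
      exact disc_le_cover hA h0 hadd (Finset.singleton_subset_iff.mp hF) hce
    exact le_antisymm hge hle


section ModelTheoryLemmas
variable {L : FirstOrder.Language.{u, u}} {U : Type u} [L.Structure U]

lemma dset_boolalg (A : Set U) (α : Type u) : IsBoolAlg (Dset L A α) :=
  ⟨Set.definable_univ, fun _ hs => hs.compl, fun _ hs _ ht => hs.inter ht⟩

lemma definable_boolalg (A : Set U) (α : Type v) :
    IsBoolAlg {s : Set (α → U) | A.Definable L s} :=
  ⟨Set.definable_univ, fun _ hs => hs.compl, fun _ hs _ ht => hs.inter ht⟩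

lemma realize_congr_free {L'' : FirstOrder.Language} {W : Type*} [L''.Structure W]
    {γ : Type*} [DecidableEq γ] {φ : L''.Formula γ} {v v' : γ → W}
    (h : ∀ i ∈ φ.freeVarFinset, v i = v' i) : φ.Realize v ↔ φ.Realize v' := by
  have h1 := BoundedFormula.realize_restrictFreeVar' (L := L'') (M := W)
    (φ := φ) (s := (↑φ.freeVarFinset : Set γ)) Set.Subset.rfl (v := v) (xs := default)
  have h2 := BoundedFormula.realize_restrictFreeVar' (L := L'') (M := W)
    (φ := φ) (s := (↑φ.freeVarFinset : Set γ)) Set.Subset.rfl (v := v') (xs := default)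
  have hvv : v ∘ (Subtype.val : (↑φ.freeVarFinset : Set γ) → γ) = v' ∘ Subtype.val := by
    funext i
    exact h i.1 (by simpa using i.2)
  constructor
  · intro hv
    exact h2.mp (by rw [← hvv]; exact h1.mpr hv)
  · intro hv
    exact h1.mp (by rw [hvv]; exact h2.mpr hv)

lemma definable_fiber {A B : Set U} {α β : Type*} {t : Set ((α ⊕ β) → U)}
    (ht : A.Definable L t) (hAB : A ⊆ B) (b : β → U) (hb : ∀ y, b y ∈ B) :
    B.Definable L {a : α → U | Sum.elim a b ∈ t} := by
  obtain ⟨φ, hφ⟩ := Set.definable_iff_exists_formula_sum.mp (ht.mono hAB)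
  let ρ : (↥B ⊕ (α ⊕ β)) → (↥B ⊕ α) := fun z =>
    match z with
    | Sum.inl c => Sum.inl c
    | Sum.inr (Sum.inl a) => Sum.inr a
    | Sum.inr (Sum.inr y) => Sum.inl ⟨b y, hb y⟩
  rw [Set.definable_iff_exists_formula_sum]
  refine ⟨φ.relabel ρ, ?_⟩
  ext a
  rw [Set.mem_setOf_eq, Set.mem_setOf_eq, Formula.realize_relabel]
  have hcmp : (Sum.elim (Subtype.val : ↥B → U) a) ∘ ρ = Sum.elim Subtype.val (Sum.elim a b) := by
    funext z
    rcases z with c | (x | y) <;> rfl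
  rw [hcmp, hφ, Set.mem_setOf_eq]

lemma definable_proj {A : Set U} (hAne : A.Nonempty) {α β : Type*}
    {t : Set ((α ⊕ β) → U)} (ht : A.Definable L t) :
    A.Definable L {v : β → U | ∃ a : α → U, Sum.elim a v ∈ t} := by
  classical
  haveI : Nonempty U := ⟨hAne.choose⟩
  haveI : Nonempty ↥A := hAne.to_subtype
  obtain ⟨φ, hφ⟩ := Set.definable_iff_exists_formula_sum.mp ht
  set d : ↥A := Classical.arbitrary ↥A with hd
  set Fa : Finset α := φ.freeVarFinset.preimage (Sum.inr ∘ Sum.inl)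
    ((Sum.inr_injective.comp Sum.inl_injective).injOn) with hFa
  set f : (↥A ⊕ (α ⊕ β)) → ((↥A ⊕ β) ⊕ ↥Fa) := fun z =>
    match z with
    | Sum.inl c => Sum.inl (Sum.inl c)
    | Sum.inr (Sum.inl a) => if h : a ∈ Fa then Sum.inr ⟨a, h⟩ else Sum.inl (Sum.inl d)
    | Sum.inr (Sum.inr y) => Sum.inl (Sum.inr y) with hf
  rw [Set.definable_iff_exists_formula_sum]
  refine ⟨(φ.relabel f).iExs ↥Fa, ?_⟩
  ext v
  rw [Set.mem_setOf_eq, Set.mem_setOf_eq, Formula.realize_iExs]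
  simp only [Formula.realize_relabel]
  constructor
  · rintro ⟨a, ha⟩
    rw [hφ, Set.mem_setOf_eq] at ha
    refine ⟨fun p => a p.1, ?_⟩
    refine (realize_congr_free (fun i hi => ?_)).mpr ha
    rcases i with c | (x | y)
    · rfl
    · have hx : x ∈ Fa := Finset.mem_preimage.mpr hi
      simp only [Function.comp_apply, hf, hx, dif_pos]
      rfl
    · rfl
  · rintro ⟨w, hw⟩
    refine ⟨fun x => if h : x ∈ Fa then w ⟨x, h⟩ else Classical.arbitrary U, ?_⟩
    rw [hφ, Set.mem_setOf_eq]
    refine (realize_congr_free (fun i hi => ?_)).mp hw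
    rcases i with c | (x | y)
    · rfl
    · have hx : x ∈ Fa := Finset.mem_preimage.mpr hi
      simp only [Function.comp_apply, hf, hx, dif_pos]
      simp only [Sum.elim_inr, Sum.elim_inl, hx, dif_pos]
    · rfl

end ModelTheoryLemmas


section Saturation
variable {L : FirstOrder.Language.{u, u}} {U : Type u} [L.Structure U]

lemma sat_finvar {κ : Cardinal.{u}} (hMon : IsMonster L U κ) (k : ℕ) :
    ∀ (A : Set U), A.Nonempty → Cardinal.mk A + Cardinal.aleph0 < κ →
    ∀ 𝒮 : Set (Set (Fin k → U)), (∀ S ∈ 𝒮, A.Definable L S) →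
    (∀ T : Finset (Set (Fin k → U)), ↑T ⊆ 𝒮 → ∃ c : Fin k → U, ∀ S ∈ T, c ∈ S) →
    ∃ c : Fin k → U, ∀ S ∈ 𝒮, c ∈ S := by
  induction k with
  | zero =>
    intro A hAne hA 𝒮 hdef hfs
    refine ⟨fun i => i.elim0, fun S hS => ?_⟩
    obtain ⟨c, hc⟩ := hfs {S} (by simpa using hS)
    have hce : (fun i : Fin 0 => i.elim0) = c := funext fun i => i.elim0
    rw [hce]
    exact hc S (Finset.mem_singleton_self S)
  | succ k ih =>
    intro A hAne hA 𝒮 hdef hfs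
    classical
    set emb : Fin (k+1) → (Fin 1 ⊕ Fin k) :=
      fun i => Fin.cases (Sum.inl 0) (fun j => Sum.inr j) i with hemb
    have hsw : ∀ (r : Fin k → U) (x : Fin 1 → U),
        (Sum.elim r x) ∘ Sum.swap = Sum.elim x r := by
      intro r x; funext z; rcases z with a | b <;> rfl
    have hcomp : ∀ (x : Fin 1 → U) (r : Fin k → U),
        (Sum.elim x r) ∘ emb = Fin.cons (x 0) r := by
      intro x r
      funext i
      refine Fin.cases ?_ (fun j => ?_) i <;> simp [hemb]
    have hE : ∀ T : Finset (Set (Fin (k+1) → U)), ↑T ⊆ 𝒮 →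
        ∃ ρ : (L[[A]]).Formula (Fin 1), ∀ x : Fin 1 → U,
          ρ.Realize x ↔ ∃ r : Fin k → U, ∀ S ∈ T, Fin.cons (x 0) r ∈ S := by
      intro T hT
      have hBT : A.Definable L (⋂ S ∈ T, S) :=
        (definable_boolalg A (Fin (k+1))).biInter_mem T (fun S => S) (fun S hS => hdef S (hT hS))
      have hBhat : A.Definable L
          ((fun g : (Fin 1 ⊕ Fin k) → U => g ∘ emb) ⁻¹' (⋂ S ∈ T, S)) :=
        hBT.preimage_comp emb
      have hBsw : A.Definable L ((fun g : (Fin k ⊕ Fin 1) → U => g ∘ Sum.swap) ⁻¹'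
          ((fun g : (Fin 1 ⊕ Fin k) → U => g ∘ emb) ⁻¹' (⋂ S ∈ T, S))) :=
        hBhat.preimage_comp Sum.swap
      obtain ⟨ρ, hρ⟩ := definable_proj hAne hBsw
      refine ⟨ρ, fun x => ?_⟩
      rw [show ρ.Realize x ↔ x ∈ Set.ofPred ρ.Realize from Iff.rfl, ← hρ, Set.mem_setOf_eq]
      constructor
      · rintro ⟨r, hr⟩
        rw [Set.mem_preimage, Set.mem_preimage, hsw r x, hcomp x r] at hr
        exact ⟨r, fun S hS => (Set.mem_iInter₂.mp hr) S hS⟩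
      · rintro ⟨r, hr⟩
        refine ⟨r, ?_⟩
        rw [Set.mem_preimage, Set.mem_preimage, hsw r x, hcomp x r]
        exact Set.mem_iInter₂.mpr hr
    choose ρf hρf using hE
    set Φ : Set ((L[[A]]).Formula (Fin 1)) := {ψ | ∃ T hT, ψ = ρf T hT} with hΦ
    have hfsΦ : ∀ Φ₀ : Finset ((L[[A]]).Formula (Fin 1)), ↑Φ₀ ⊆ Φ →
        ∃ b : Fin 1 → U, ∀ ψ ∈ Φ₀, Formula.Realize ψ b := by
      intro Φ₀ hΦ₀
      have hch : ∀ ψ : {ψ // ψ ∈ Φ₀}, ∃ T, ∃ hT : ↑T ⊆ 𝒮, ψ.1 = ρf T hT :=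
        fun ψ => hΦ₀ ψ.2
      choose Tof hTof heq using hch
      set Tstar := Finset.univ.biUnion (fun ψ : {ψ // ψ ∈ Φ₀} => Tof ψ) with hTstar
      have hTs : ↑Tstar ⊆ 𝒮 := by
        intro S hS
        rw [Finset.mem_coe, hTstar, Finset.mem_biUnion] at hS
        obtain ⟨ψ, -, hψ⟩ := hS
        exact hTof ψ hψ
      obtain ⟨c, hc⟩ := hfs Tstar hTs
      refine ⟨fun _ => c 0, fun ψ hψ => ?_⟩
      have hψeq : ψ = ρf (Tof ⟨ψ, hψ⟩) (hTof ⟨ψ, hψ⟩) := heq ⟨ψ, hψ⟩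
      rw [hψeq]
      refine (hρf _ _ _).mpr ⟨Fin.tail c, fun S hS => ?_⟩
      have hcc : Fin.cons ((fun _ : Fin 1 => c 0) 0) (Fin.tail c) = c := by
        show Fin.cons (c 0) (Fin.tail c) = c
        exact Fin.cons_self_tail c
      rw [hcc]
      exact hc S (Finset.mem_biUnion.mpr ⟨⟨ψ, hψ⟩, Finset.mem_univ _, hS⟩)
    obtain ⟨u, hu⟩ := hMon.1 A (lt_of_le_of_lt (self_le_add_right _ _) hA) Φ hfsΦ
    have huE : ∀ T : Finset (Set (Fin (k+1) → U)), ∀ hT : ↑T ⊆ 𝒮,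
        ∃ r : Fin k → U, ∀ S ∈ T, Fin.cons (u 0) r ∈ S :=
      fun T hT => (hρf T hT u).mp (hu _ ⟨T, hT, rfl⟩)
    set A' : Set U := insert (u 0) A with hA'def
    have hA'ne : A'.Nonempty := ⟨u 0, Set.mem_insert _ _⟩
    have hA' : Cardinal.mk A' + Cardinal.aleph0 < κ := by
      calc Cardinal.mk A' + Cardinal.aleph0
          ≤ (Cardinal.mk A + 1) + Cardinal.aleph0 :=
            add_le_add_left Cardinal.mk_insert_le _
        _ ≤ (Cardinal.mk A + Cardinal.aleph0) + Cardinal.aleph0 :=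
            add_le_add_left (add_le_add_right Cardinal.one_le_aleph0 _) _
        _ = Cardinal.mk A + (Cardinal.aleph0 + Cardinal.aleph0) := add_assoc _ _ _
        _ = Cardinal.mk A + Cardinal.aleph0 := by rw [Cardinal.aleph0_add_aleph0]
        _ < κ := hA
    set sl : Set (Fin (k+1) → U) → Set (Fin k → U) :=
      fun S => {r | Fin.cons (u 0) r ∈ S} with hsl
    have hsldef : ∀ S ∈ 𝒮, A'.Definable L (sl S) := by
      intro S hS
      have h1 : A'.Definable L ((fun g : (Fin 1 ⊕ Fin k) → U => g ∘ emb) ⁻¹' S) :=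
        ((hdef S hS).mono (Set.subset_insert _ _)).preimage_comp emb
      have h2 : A'.Definable L ((fun g : (Fin k ⊕ Fin 1) → U => g ∘ Sum.swap) ⁻¹'
          ((fun g : (Fin 1 ⊕ Fin k) → U => g ∘ emb) ⁻¹' S)) :=
        h1.preimage_comp Sum.swap
      have h3 := definable_fiber h2 Set.Subset.rfl u (fun y => by
        rw [show u y = u 0 from congrArg u (Subsingleton.elim y 0)]
        exact Set.mem_insert _ _)
      have hset : {a : Fin k → U | Sum.elim a u ∈ (fun g : (Fin k ⊕ Fin 1) → U => g ∘ Sum.swap) ⁻¹'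
          ((fun g : (Fin 1 ⊕ Fin k) → U => g ∘ emb) ⁻¹' S)} = sl S := by
        ext r
        simp only [Set.mem_setOf_eq, Set.mem_preimage, hsl]
        rw [hsw r u, hcomp u r]
      rwa [hset] at h3
    have hfs' : ∀ T' : Finset (Set (Fin k → U)), ↑T' ⊆ sl '' 𝒮 →
        ∃ r : Fin k → U, ∀ S' ∈ T', r ∈ S' := by
      intro T' hT'
      have hch : ∀ S' : {S' // S' ∈ T'}, ∃ S, S ∈ 𝒮 ∧ sl S = S'.1 :=
        fun S' => hT' S'.2
      choose Sof hSof hSeq using hch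
      set T := Finset.univ.image (fun S' : {S' // S' ∈ T'} => Sof S') with hT
      have hTsub : ↑T ⊆ 𝒮 := by
        intro S hS
        rw [Finset.mem_coe, hT, Finset.mem_image] at hS
        obtain ⟨S', -, rfl⟩ := hS
        exact hSof S'
      obtain ⟨r, hr⟩ := huE T hTsub
      refine ⟨r, fun S' hS' => ?_⟩
      have h := hr (Sof ⟨S', hS'⟩)
        (Finset.mem_image.mpr ⟨⟨S', hS'⟩, Finset.mem_univ _, rfl⟩)
      have h2 : r ∈ sl (Sof ⟨S', hS'⟩) := h
      rw [hSeq ⟨S', hS'⟩] at h2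
      exact h2
    obtain ⟨r, hr⟩ := ih A' hA'ne hA' (sl '' 𝒮)
      (fun S' hS' => by obtain ⟨S, hS, rfl⟩ := hS'; exact hsldef S hS) hfs'
    refine ⟨Fin.cons (u 0) r, fun S hS => ?_⟩
    exact hr (sl S) ⟨S, hS, rfl⟩

end Saturation


section Pointwise
variable {L : FirstOrder.Language.{u, u}} {U : Type u} [L.Structure U]

lemma pointwise_approx {Mset : Set U} (hMne : Mset.Nonempty) {α : Type u}
    (μ : KMeasure L Mset α)
    (hμ : SmoothOn (Dset L Mset α) (Dset L (Set.univ : Set U) α) μ.val)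
    {e : Set (α → U)} (he : e ∈ Dset L (Set.univ : Set U) α) {ε : ℝ} (hε : 0 < ε) :
    ∃ θ₁ θ₂ : Set (α → U), θ₁ ∈ Dset L Mset α ∧ θ₂ ∈ Dset L Mset α ∧
      θ₁ ⊆ e ∧ e ⊆ θ₂ ∧ μ.val θ₂ - μ.val θ₁ < ε := by
  classical
  haveI : Nonempty U := ⟨hMne.choose⟩
  haveI : Nonempty (α → U) := ⟨fun _ => Classical.arbitrary U⟩
  have hA : IsBoolAlg (Dset L Mset α) := dset_boolalg Mset α
  obtain ⟨W₁, hW₁0, hW₁1, hW₁add, hW₁ag, hW₁e⟩ :=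
    fam_extension hA μ.nonneg μ.isProb μ.additive e
  obtain ⟨W₂, hW₂0, hW₂1, hW₂add, hW₂ag, hW₂e⟩ :=
    fam_extension hA μ.nonneg μ.isProb μ.additive eᶜ
  set N₁ : FAM (α → U) (Dset L (Set.univ : Set U) α) :=
    ⟨W₁, fun s _ => hW₁0 s, hW₁1, fun s t _ _ hd => hW₁add s t hd⟩ with hN₁
  set N₂ : FAM (α → U) (Dset L (Set.univ : Set U) α) :=
    ⟨W₂, fun s _ => hW₂0 s, hW₂1, fun s t _ _ hd => hW₂add s t hd⟩ with hN₂
  have hag₁ : agreeOn (Dset L Mset α) N₁.val μ.val := fun s hs => hW₁ag s hs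
  have hag₂ : agreeOn (Dset L Mset α) N₂.val μ.val := fun s hs => hW₂ag s hs
  have hkey : W₁ e = W₂ e := hμ.2 N₁ N₂ hag₁ hag₂ e he
  have hW2e' : W₂ e = 1 - W₂ eᶜ := by
    have h := hW₂add e eᶜ disjoint_compl_right
    rw [Set.union_compl_self, hW₂1] at h
    linarith
  set S₁ : Set ℝ := μ.val '' {c | c ∈ Dset L Mset α ∧ e ⊆ c} with hS₁
  set S₂ : Set ℝ := μ.val '' {c | c ∈ Dset L Mset α ∧ eᶜ ⊆ c} with hS₂
  have hS₁ne : S₁.Nonempty := ⟨μ.val Set.univ, Set.univ, ⟨hA.1, Set.subset_univ _⟩, rfl⟩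
  have hS₂ne : S₂.Nonempty := ⟨μ.val Set.univ, Set.univ, ⟨hA.1, Set.subset_univ _⟩, rfl⟩
  have hkey2 : sInf S₁ = 1 - sInf S₂ := by
    rw [← hW₁e, ← hW₂e, hkey, hW2e']
  obtain ⟨y₁, hy₁mem, hy₁⟩ := Real.lt_sInf_add_pos hS₁ne (half_pos hε)
  obtain ⟨y₂, hy₂mem, hy₂⟩ := Real.lt_sInf_add_pos hS₂ne (half_pos hε)
  obtain ⟨c₁, ⟨hc₁D, hc₁e⟩, rfl⟩ := hy₁mem
  obtain ⟨c₂, ⟨hc₂D, hc₂e⟩, rfl⟩ := hy₂mem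
  refine ⟨c₂ᶜ, c₁, hA.2.1 _ hc₂D, hc₁D, Set.compl_subset_comm.mpr hc₂e, hc₁e, ?_⟩
  have hμc₂ : μ.val c₂ᶜ = 1 - μ.val c₂ := by
    have h := μ.additive c₂ᶜ c₂ (hA.2.1 _ hc₂D) hc₂D disjoint_compl_left
    rw [Set.compl_union_self, μ.isProb] at h
    linarith
  rw [hμc₂]
  linarith

end Pointwise

section Rectangle
variable {L : FirstOrder.Language.{u, u}} {U : Type u} [L.Structure U]
  {Mset : Set U} {α β : Type u}

lemma cylL_definable {A : Set U} {s : Set (α → U)} (hs : A.Definable L s) :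
    A.Definable L (cylL β s) := hs.preimage_comp Sum.inl

lemma cylR_definable {A : Set U} {t : Set (β → U)} (ht : A.Definable L t) :
    A.Definable L (cylR α t) := ht.preimage_comp Sum.inr

lemma rect_value
    (μ : KMeasure L Mset α) (ν : KMeasure L Mset β)
    (hν : SmoothOn (Dset L Mset β) (Dset L (Set.univ : Set U) β) ν.val)
    (ω : KMeasure L Mset (α ⊕ β)) (hω : SepAmalgamOn L Mset ω.val μ.val ν.val)
    (W : FAM ((α ⊕ β) → U) (Dset L (Set.univ : Set U) (α ⊕ β)))
    (hWag : agreeOn (Dset L Mset (α ⊕ β)) W.val ω.val)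
    (ν' : FAM (β → U) (Dset L (Set.univ : Set U) β))
    (hν'ag : agreeOn (Dset L Mset β) ν'.val ν.val)
    {θ : Set (α → U)} (hθ : θ ∈ Dset L Mset α)
    {ψ : Set (β → U)} (hψ : ψ ∈ Dset L (Set.univ : Set U) β) :
    W.val (cylL β θ ∩ cylR α ψ) = μ.val θ * ν'.val ψ := by
  classical
  have hθu : cylL β θ ∈ Dset L Mset (α ⊕ β) := cylL_definable hθ
  have hcylRuniv : cylR α (Set.univ : Set (β → U)) = Set.univ :=
    Set.eq_univ_of_forall fun h => Set.mem_univ _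
  have hcylθuniv : cylL β θ ∩ cylR α (Set.univ : Set (β → U)) = cylL β θ := by
    rw [hcylRuniv, Set.inter_univ]
  have hWθ : W.val (cylL β θ) = μ.val θ := by
    have h1 : W.val (cylL β θ) = ω.val (cylL β θ) := hWag _ hθu
    have h2 : ω.val (cylL β θ ∩ cylR α Set.univ) = μ.val θ * ν.val Set.univ :=
      hω θ Set.univ hθ Set.definable_univ
    rw [hcylθuniv] at h2
    rw [h1, h2, ν.isProb, mul_one]
  have hmemt : ∀ t : Set (β → U), t ∈ Dset L (Set.univ : Set U) β →
      (cylL β θ ∩ cylR α t) ∈ Dset L (Set.univ : Set U) (α ⊕ β) := fun t ht =>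
    Set.Definable.inter (Set.Definable.mono (cylL_definable hθ) (Set.subset_univ _))
      (cylR_definable ht)
  have hdisjR : ∀ {t t' : Set (β → U)}, Disjoint t t' →
      Disjoint (cylL β θ ∩ cylR α t) (cylL β θ ∩ cylR α t') := by
    intro t t' hd
    rw [Set.disjoint_left]
    rintro h ⟨-, h2⟩ ⟨-, h2'⟩
    exact Set.disjoint_left.mp hd h2 h2'
  rcases lt_or_eq_of_le (μ.nonneg θ hθ) with hpos | hzero
  · let N : FAM (β → U) (Dset L (Set.univ : Set U) β) :=
      { val := fun t => W.val (cylL β θ ∩ cylR α t) / μ.val θ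
        nonneg := fun t ht => div_nonneg (W.nonneg _ (hmemt t ht)) (le_of_lt hpos)
        isProb := by
          show W.val (cylL β θ ∩ cylR α Set.univ) / μ.val θ = 1
          rw [hcylθuniv, hWθ, div_self (ne_of_gt hpos)]
        additive := by
          intro t t' ht ht' hd
          show W.val (cylL β θ ∩ cylR α (t ∪ t')) / μ.val θ = _ + _
          have hsplit : cylL β θ ∩ cylR α (t ∪ t')
              = (cylL β θ ∩ cylR α t) ∪ (cylL β θ ∩ cylR α t') := by
            have hcylun : cylR α (t ∪ t') = cylR α t ∪ cylR α t' := by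
              ext h; simp [cylR]
            rw [hcylun, Set.inter_union_distrib_left]
          rw [hsplit, W.additive _ _ (hmemt t ht) (hmemt t' ht') (hdisjR hd), add_div] }
    have hNag : agreeOn (Dset L Mset β) N.val ν.val := by
      intro t ht
      show W.val (cylL β θ ∩ cylR α t) / μ.val θ = ν.val t
      have hmem : (cylL β θ ∩ cylR α t) ∈ Dset L Mset (α ⊕ β) :=
        Set.Definable.inter (cylL_definable hθ) (cylR_definable ht)
      rw [hWag _ hmem, hω θ t hθ ht]
      field_simp
    have hNψ : N.val ψ = ν'.val ψ := hν.2 N ν' hNag hν'ag ψ hψ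
    have h2 : W.val (cylL β θ ∩ cylR α ψ) / μ.val θ = ν'.val ψ := hNψ
    field_simp at h2
    rw [h2]
  · have h0 : μ.val θ = 0 := hzero.symm
    have hle : W.val (cylL β θ ∩ cylR α ψ) ≤ W.val (cylL β θ) :=
      g_mono (dset_boolalg (Set.univ : Set U) (α ⊕ β)) W.additive W.nonneg
        (hmemt ψ hψ) (Set.Definable.mono (cylL_definable hθ) (Set.subset_univ _))
        Set.inter_subset_left
    have hge : 0 ≤ W.val (cylL β θ ∩ cylR α ψ) := W.nonneg _ (hmemt ψ hψ)
    rw [hWθ, h0] at hle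
    rw [h0, zero_mul]
    linarith

end Rectangle


section Approx
variable {L : FirstOrder.Language.{u, u}} {U : Type u} [L.Structure U]

lemma approx_partition {κ : Cardinal.{u}} (hMon : IsMonster L U κ)
    {Mset : Set U} (hMne : Mset.Nonempty) (hMsmall : SmallSet L κ Mset)
    {α β : Type u} (μ : KMeasure L Mset α)
    (hμ : SmoothOn (Dset L Mset α) (Dset L (Set.univ : Set U) α) μ.val)
    {s : Set ((α ⊕ β) → U)} (hs : s ∈ Dset L (Set.univ : Set U) (α ⊕ β))
    {ε : ℝ} (hε : 0 < ε) :
    ∃ (n : ℕ) (ψ : Fin n → Set (β → U)) (θ₁ θ₂ : Fin n → Set (α → U)),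
      (∀ i, ψ i ∈ Dset L (Set.univ : Set U) β) ∧
      (∀ i, θ₁ i ∈ Dset L Mset α) ∧ (∀ i, θ₂ i ∈ Dset L Mset α) ∧
      (∀ i j, i ≠ j → Disjoint (ψ i) (ψ j)) ∧
      (⋃ i, ψ i) = Set.univ ∧
      (∀ i, ∀ b ∈ ψ i, θ₁ i ⊆ {a | Sum.elim a b ∈ s} ∧ {a | Sum.elim a b ∈ s} ⊆ θ₂ i) ∧
      (∀ i, μ.val (θ₂ i) - μ.val (θ₁ i) < ε) := by
  classical
  haveI : Nonempty U := ⟨hMne.choose⟩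
  -- a small parameter set A over which s is definable
  obtain ⟨C₀, hC₀sub, hC₀def⟩ := Set.definable_iff_finitely_definable.mp hs
  set A : Set U := Mset ∪ ↑C₀ with hAdef
  have hMA : Mset ⊆ A := Set.subset_union_left
  have hAne : A.Nonempty := hMne.mono hMA
  have hsA : A.Definable L s := hC₀def.mono Set.subset_union_right
  have hAsmall : Cardinal.mk A + Cardinal.aleph0 < κ := by
    have h1 : Cardinal.mk A ≤ Cardinal.mk Mset + Cardinal.mk (↑C₀ : Set U) :=
      Cardinal.mk_union_le _ _
    haveI : Countable (↑(↑C₀ : Set U)) := (C₀.finite_toSet).countable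
    have h2 : Cardinal.mk (↑C₀ : Set U) ≤ Cardinal.aleph0 := Cardinal.mk_le_aleph0
    calc Cardinal.mk A + Cardinal.aleph0
        ≤ (Cardinal.mk Mset + Cardinal.aleph0) + Cardinal.aleph0 :=
          add_le_add_left (le_trans h1 (add_le_add_right h2 _)) _
      _ = Cardinal.mk Mset + (Cardinal.aleph0 + Cardinal.aleph0) := add_assoc _ _ _
      _ = Cardinal.mk Mset + Cardinal.aleph0 := by rw [Cardinal.aleph0_add_aleph0]
      _ ≤ Cardinal.mk Mset + L.card + Cardinal.aleph0 :=
          add_le_add_left (self_le_add_right _ _) _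
      _ < κ := hMsmall
  -- a defining formula and its finite β-support
  obtain ⟨φ, hφ⟩ := Set.definable_iff_exists_formula_sum.mp hsA
  set Fb : Finset β := φ.freeVarFinset.preimage (Sum.inr ∘ Sum.inr)
    ((Sum.inr_injective.comp Sum.inr_injective).injOn) with hFbdef
  set u₀ : U := hMne.choose with hu₀def
  have hu₀M : u₀ ∈ Mset := hMne.choose_spec
  set bext : ({y // y ∈ Fb} → U) → (β → U) :=
    fun c y => if h : y ∈ Fb then c ⟨y, h⟩ else u₀ with hbext
  have hsupp : ∀ (a : α → U) (b b' : β → U), (∀ y ∈ Fb, b y = b' y) →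
      (Sum.elim a b ∈ s ↔ Sum.elim a b' ∈ s) := by
    intro a b b' hbb
    rw [hφ, Set.mem_setOf_eq, Set.mem_setOf_eq]
    refine realize_congr_free (fun i hi => ?_)
    rcases i with c | (x | y)
    · rfl
    · rfl
    · exact hbb y (Finset.mem_preimage.mpr hi)
  -- the reduced set over (α ⊕ γ) where γ := ↥Fb
  set ρ : (↥A ⊕ (α ⊕ β)) → (↥A ⊕ (α ⊕ {y // y ∈ Fb})) := fun z =>
    match z with
    | Sum.inl c => Sum.inl c
    | Sum.inr (Sum.inl a) => Sum.inr (Sum.inl a)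
    | Sum.inr (Sum.inr y) =>
        if h : y ∈ Fb then Sum.inr (Sum.inr ⟨y, h⟩) else Sum.inl ⟨u₀, hMA hu₀M⟩
    with hρdef
  set shat : Set ((α ⊕ {y // y ∈ Fb}) → U) :=
    {h | Sum.elim (h ∘ Sum.inl) (bext (h ∘ Sum.inr)) ∈ s} with hshatdef
  have hshat : A.Definable L shat := by
    rw [Set.definable_iff_exists_formula_sum]
    refine ⟨φ.relabel ρ, ?_⟩
    ext h
    rw [hshatdef, Set.mem_setOf_eq, Set.mem_setOf_eq, Formula.realize_relabel, hφ,
      Set.mem_setOf_eq]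
    have hcmp : (Sum.elim Subtype.val h) ∘ ρ
        = Sum.elim Subtype.val (Sum.elim (h ∘ Sum.inl) (bext (h ∘ Sum.inr))) := by
      funext z
      rcases z with c | (x | y)
      · rfl
      · rfl
      · by_cases hy : y ∈ Fb
        · simp [hρdef, hbext, hy]
        · simp [hρdef, hbext, hy]
    rw [hcmp]
  have hfib : ∀ (c : {y // y ∈ Fb} → U) (a : α → U),
      Sum.elim a c ∈ shat ↔ Sum.elim a (bext c) ∈ s := by
    intro c a
    rw [hshatdef, Set.mem_setOf_eq, Sum.elim_comp_inl, Sum.elim_comp_inr]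
  have hec : ∀ c : {y // y ∈ Fb} → U,
      (Set.univ : Set U).Definable L {a : α → U | Sum.elim a (bext c) ∈ s} :=
    fun c => definable_fiber hsA (Set.subset_univ A) (bext c) (fun _ => Set.mem_univ _)
  -- the Ψ sets at the finite level
  set PsiSet : Set (α → U) → Set (α → U) → Set ({y // y ∈ Fb} → U) := fun θ₁ θ₂ =>
    {c | θ₁ ⊆ {a | Sum.elim a c ∈ shat} ∧ {a | Sum.elim a c ∈ shat} ⊆ θ₂} with hPsiSetdef
  have hPsiDef : ∀ θ₁ θ₂ : Set (α → U), θ₁ ∈ Dset L Mset α → θ₂ ∈ Dset L Mset α →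
      A.Definable L (PsiSet θ₁ θ₂) := by
    intro θ₁ θ₂ h1 h2
    have hth1A : A.Definable L θ₁ := Set.Definable.mono h1 hMA
    have hth2A : A.Definable L θ₂ := Set.Definable.mono h2 hMA
    have hb1 : A.Definable L {c : {y // y ∈ Fb} → U |
        ∃ a : α → U, Sum.elim a c ∈ (cylL {y // y ∈ Fb} θ₁ ∩ shatᶜ)} :=
      definable_proj hAne (Set.Definable.inter (cylL_definable hth1A) hshat.compl)
    have hb2 : A.Definable L {c : {y // y ∈ Fb} → U |
        ∃ a : α → U, Sum.elim a c ∈ (shat ∩ (cylL {y // y ∈ Fb} θ₂)ᶜ)} :=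
      definable_proj hAne (Set.Definable.inter hshat (cylL_definable hth2A).compl)
    have hset : PsiSet θ₁ θ₂ =
        {c : {y // y ∈ Fb} → U | ∃ a : α → U,
            Sum.elim a c ∈ (cylL {y // y ∈ Fb} θ₁ ∩ shatᶜ)}ᶜ ∩
        {c : {y // y ∈ Fb} → U | ∃ a : α → U,
            Sum.elim a c ∈ (shat ∩ (cylL {y // y ∈ Fb} θ₂)ᶜ)}ᶜ := by
      ext c
      constructor
      · rintro ⟨h1c, h2c⟩
        constructor
        · rintro ⟨a, ha1, ha2⟩
          exact ha2 (h1c ha1)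
        · rintro ⟨a, ha1, ha2⟩
          exact ha2 (h2c ha1)
      · rintro ⟨hc1, hc2⟩
        constructor
        · intro a ha
          by_contra hna
          exact hc1 ⟨a, ha, hna⟩
        · intro a ha
          by_contra hna
          exact hc2 ⟨a, ha, hna⟩
    rw [hset]
    exact Set.Definable.inter hb1.compl hb2.compl
  -- every finite-level point is covered
  have hcover : ∀ c : {y // y ∈ Fb} → U, ∃ θ₁ θ₂ : Set (α → U),
      θ₁ ∈ Dset L Mset α ∧ θ₂ ∈ Dset L Mset α ∧ μ.val θ₂ - μ.val θ₁ < ε ∧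
      c ∈ PsiSet θ₁ θ₂ := by
    intro c
    obtain ⟨θ₁, θ₂, h1, h2, hsub1, hsub2, hgap⟩ := pointwise_approx hMne μ hμ (hec c) hε
    refine ⟨θ₁, θ₂, h1, h2, hgap, ?_, ?_⟩
    · intro a ha
      exact (hfib c a).mpr (hsub1 ha)
    · intro a ha
      exact hsub2 ((hfib c a).mp ha)
  -- compactness at the finite level
  set k := Fintype.card {y // y ∈ Fb} with hkdef
  set eγ : {y // y ∈ Fb} ≃ Fin k := Fintype.equivFin _ with heγ
  set 𝒮 : Set (Set (Fin k → U)) := {S | ∃ θ₁ θ₂ : Set (α → U),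
    θ₁ ∈ Dset L Mset α ∧ θ₂ ∈ Dset L Mset α ∧ μ.val θ₂ - μ.val θ₁ < ε ∧
    S = {v : Fin k → U | v ∘ eγ ∈ PsiSet θ₁ θ₂}ᶜ} with h𝒮def
  have hdefS : ∀ S ∈ 𝒮, A.Definable L S := by
    rintro S ⟨θ₁, θ₂, h1, h2, -, rfl⟩
    exact ((hPsiDef θ₁ θ₂ h1 h2).preimage_comp eγ).compl
  have hnosat : ¬ ∃ c : Fin k → U, ∀ S ∈ 𝒮, c ∈ S := by
    rintro ⟨c, hc⟩
    obtain ⟨θ₁, θ₂, h1, h2, hgapc, hPsi⟩ := hcover (c ∘ eγ)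
    exact hc _ ⟨θ₁, θ₂, h1, h2, hgapc, rfl⟩ hPsi
  have hnfs : ¬ ∀ T : Finset (Set (Fin k → U)), ↑T ⊆ 𝒮 →
      ∃ c : Fin k → U, ∀ S ∈ T, c ∈ S :=
    fun h => hnosat (sat_finvar hMon k A hAne hAsmall 𝒮 hdefS h)
  push_neg at hnfs
  obtain ⟨T, hT𝒮, hTfail⟩ := hnfs
  have hchT : ∀ S : {S // S ∈ T}, ∃ θ₁ θ₂ : Set (α → U),
      θ₁ ∈ Dset L Mset α ∧ θ₂ ∈ Dset L Mset α ∧ μ.val θ₂ - μ.val θ₁ < ε ∧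
      S.1 = {v : Fin k → U | v ∘ eγ ∈ PsiSet θ₁ θ₂}ᶜ := fun S => hT𝒮 S.2
  choose th1 th2 hth1 hth2 hgapT hSeq using hchT
  set n := Fintype.card {S // S ∈ T} with hndef
  set eT : Fin n ≃ {S // S ∈ T} := (Fintype.equivFin _).symm with heT
  set ψraw : Fin n → Set (β → U) := fun i =>
    {b : β → U | (b ∘ Subtype.val) ∈ PsiSet (th1 (eT i)) (th2 (eT i))} with hψrawdef
  have hψrawD : ∀ i, (Set.univ : Set U).Definable L (ψraw i) := fun i =>
    ((hPsiDef _ _ (hth1 (eT i)) (hth2 (eT i))).preimage_comp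
      (Subtype.val : {y // y ∈ Fb} → β)).mono (Set.subset_univ A)
  set ψ : Fin n → Set (β → U) := fun i =>
    ψraw i \ ⋃ j ∈ Finset.univ.filter (fun j => j < i), ψraw j with hψdef
  have hψsub : ∀ i, ψ i ⊆ ψraw i := fun i => Set.diff_subset
  have hψD : ∀ i, ψ i ∈ Dset L (Set.univ : Set U) β := fun i =>
    Set.Definable.sdiff (hψrawD i)
      (Set.definable_biUnion_finset (fun j => hψrawD j) _)
  have hψdisj : ∀ i j, i ≠ j → Disjoint (ψ i) (ψ j) := by
    have key : ∀ i j : Fin n, i < j → Disjoint (ψ i) (ψ j) := by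
      intro i j hlt
      rw [Set.disjoint_left]
      intro b hbi hbj
      exact hbj.2 (Set.mem_biUnion
        (Finset.mem_filter.mpr ⟨Finset.mem_univ _, hlt⟩) (hψsub i hbi))
    intro i j hne
    rcases lt_or_gt_of_ne hne with hlt | hlt
    · exact key i j hlt
    · exact (key j i hlt).symm
  have hψcover : (⋃ i, ψ i) = Set.univ := by
    apply Set.eq_univ_of_forall
    intro b
    have hex : ∃ i, b ∈ ψraw i := by
      obtain ⟨S, hST, hSnot⟩ := hTfail (((b ∘ Subtype.val) ∘ eγ.symm))
      refine ⟨eT.symm ⟨S, hST⟩, ?_⟩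
      rw [hψrawdef]
      simp only [Set.mem_setOf_eq, Equiv.apply_symm_apply]
      have heqS : S = {v : Fin k → U | v ∘ eγ ∈ PsiSet (th1 ⟨S, hST⟩) (th2 ⟨S, hST⟩)}ᶜ :=
        hSeq ⟨S, hST⟩
      rw [heqS] at hSnot
      have h2 : ((b ∘ Subtype.val) ∘ eγ.symm) ∈
          {v : Fin k → U | v ∘ eγ ∈ PsiSet (th1 ⟨S, hST⟩) (th2 ⟨S, hST⟩)} := by
        by_contra hcon
        exact hSnot hcon
      have h3 : ((b ∘ Subtype.val) ∘ eγ.symm) ∘ eγ = b ∘ Subtype.val := by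
        funext y
        simp
      rw [Set.mem_setOf_eq, h3] at h2
      exact h2
    set Tf := Finset.univ.filter (fun i => b ∈ ψraw i) with hTfdef
    have hTfne : Tf.Nonempty :=
      ⟨hex.choose, Finset.mem_filter.mpr ⟨Finset.mem_univ _, hex.choose_spec⟩⟩
    set i₀ := Tf.min' hTfne with hi₀def
    have hbi₀ : b ∈ ψraw i₀ := (Finset.mem_filter.mp (Tf.min'_mem hTfne)).2
    refine Set.mem_iUnion.mpr ⟨i₀, hbi₀, ?_⟩
    intro hmem
    rw [Set.mem_iUnion₂] at hmem
    obtain ⟨j, hj, hbj⟩ := hmem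
    have hjlt : j < i₀ := (Finset.mem_filter.mp hj).2
    have : i₀ ≤ j := Tf.min'_le j (Finset.mem_filter.mpr ⟨Finset.mem_univ _, hbj⟩)
    exact absurd hjlt (not_lt.mpr this)
  refine ⟨n, ψ, fun i => th1 (eT i), fun i => th2 (eT i), hψD,
    fun i => hth1 (eT i), fun i => hth2 (eT i), hψdisj, hψcover, ?_, fun i => hgapT (eT i)⟩
  intro i b hb
  have hbraw : b ∈ ψraw i := hψsub i hb
  rw [hψrawdef, Set.mem_setOf_eq, hPsiSetdef] at hbraw
  obtain ⟨h1, h2⟩ := hbraw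
  have hagree : ∀ y ∈ Fb, bext (b ∘ Subtype.val) y = b y := by
    intro y hy
    simp [hbext, hy]
  have hfibs : ∀ a : α → U, (Sum.elim a (b ∘ Subtype.val) ∈ shat ↔ Sum.elim a b ∈ s) := by
    intro a
    rw [hfib (b ∘ Subtype.val) a]
    exact hsupp a (bext (b ∘ Subtype.val)) b hagree
  constructor
  · intro a ha
    exact (hfibs a).mp (h1 ha)
  · intro a ha
    exact h2 ((hfibs a).mpr ha)

end Approx

set_option maxHeartbeats 1000000 in
/-- If `μ(x)` and `ν(y)` are smooth Keisler measures over a small model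
`M`, then their (unique) separated amalgam `μ × ν` is smooth over `M`. -/
theorem statement_8
    (L : FirstOrder.Language.{u, u}) (U : Type u) [L.Structure U]
    (κ : Cardinal.{u}) (hMon : IsMonster L U κ)
    (Mset : Set U) (hM : IsElemSubset L U Mset) (hMsmall : SmallSet L κ Mset)
    (α β : Type u) (μ : KMeasure L Mset α) (ν : KMeasure L Mset β)
    (hμ : SmoothOn (Dset L Mset α) (Dset L (Set.univ : Set U) α) μ.val)
    (hν : SmoothOn (Dset L Mset β) (Dset L (Set.univ : Set U) β) ν.val) :
    ∀ ω : KMeasure L Mset (α ⊕ β), SepAmalgamOn L Mset ω.val μ.val ν.val →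
      SmoothOn (Dset L Mset (α ⊕ β)) (Dset L (Set.univ : Set U) (α ⊕ β)) ω.val := by
  intro ω hω
  classical
  have hMne : Mset.Nonempty := hM.1
  haveI : Nonempty U := ⟨hMne.choose⟩
  haveI : Nonempty ((α ⊕ β) → U) := ⟨fun _ => Classical.arbitrary U⟩
  constructor
  · obtain ⟨W, h0, h1, hadd, hag, -⟩ :=
      fam_extension (dset_boolalg Mset (α ⊕ β)) ω.nonneg ω.isProb ω.additive ∅
    exact ⟨⟨W, fun t _ => h0 t, h1, fun t t' _ _ hd => hadd t t' hd⟩,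
      fun t htM => hag t htM⟩
  · intro W₁ W₂ hag₁ hag₂ s hs
    obtain ⟨ν', hν'ag⟩ := hν.1
    have hsandwich : ∀ (W : FAM ((α ⊕ β) → U) (Dset L (Set.univ : Set U) (α ⊕ β))),
        agreeOn (Dset L Mset (α ⊕ β)) W.val ω.val →
        ∀ (n : ℕ) (ψf : Fin n → Set (β → U)) (θ₁ θ₂ : Fin n → Set (α → U)),
        (∀ i, ψf i ∈ Dset L (Set.univ : Set U) β) →
        (∀ i, θ₁ i ∈ Dset L Mset α) → (∀ i, θ₂ i ∈ Dset L Mset α) →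
        (∀ i j, i ≠ j → Disjoint (ψf i) (ψf j)) →
        ((⋃ i, ψf i) = Set.univ) →
        (∀ i, ∀ b ∈ ψf i, θ₁ i ⊆ {a | Sum.elim a b ∈ s} ∧ {a | Sum.elim a b ∈ s} ⊆ θ₂ i) →
        (∑ i, μ.val (θ₁ i) * ν'.val (ψf i)) ≤ W.val s ∧
          W.val s ≤ ∑ i, μ.val (θ₂ i) * ν'.val (ψf i) := by
      intro W hWag n ψf θ₁ θ₂ hψD hθ₁D hθ₂D hdisj hcover hfib
      have halg := dset_boolalg (L := L) (Set.univ : Set U) (α ⊕ β)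
      have hmem : ∀ i, (s ∩ cylR α (ψf i)) ∈ Dset L (Set.univ : Set U) (α ⊕ β) :=
        fun i => Set.Definable.inter hs (cylR_definable (hψD i))
      have hdisj2 : ∀ i ∈ (Finset.univ : Finset (Fin n)), ∀ j ∈ Finset.univ, i ≠ j →
          Disjoint (s ∩ cylR α (ψf i)) (s ∩ cylR α (ψf j)) := by
        intro i _ j _ hne
        rw [Set.disjoint_left]
        rintro h ⟨-, h2⟩ ⟨-, h2'⟩
        exact Set.disjoint_left.mp (hdisj i j hne) h2 h2'
      have hdecomp : (⋃ i ∈ (Finset.univ : Finset (Fin n)), (s ∩ cylR α (ψf i))) = s := by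
        ext h
        constructor
        · intro hh
          obtain ⟨i, -, hmm⟩ := Set.mem_iUnion₂.mp hh
          exact hmm.1
        · intro hh
          have hb : (fun b => h (Sum.inr b)) ∈ ⋃ i, ψf i := by
            rw [hcover]; exact Set.mem_univ _
          obtain ⟨i, hi⟩ := Set.mem_iUnion.mp hb
          exact Set.mem_biUnion (Finset.mem_univ i) ⟨hh, hi⟩
      have hWs : W.val s = ∑ i, W.val (s ∩ cylR α (ψf i)) := by
        have hgs := g_sum halg W.additive Finset.univ (fun i => s ∩ cylR α (ψf i))
          (fun i _ => hmem i) hdisj2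
        rw [hdecomp] at hgs
        exact hgs
      have helim : ∀ h : (α ⊕ β) → U,
          Sum.elim (fun a => h (Sum.inl a)) (fun b => h (Sum.inr b)) = h := by
        intro h; funext z; rcases z with a | b <;> rfl
      have hsub1 : ∀ i, cylL β (θ₁ i) ∩ cylR α (ψf i) ⊆ s ∩ cylR α (ψf i) := by
        intro i h hh
        obtain ⟨h1, h2⟩ := hh
        refine ⟨?_, h2⟩
        have hmem2 : Sum.elim (fun a => h (Sum.inl a)) (fun b => h (Sum.inr b)) ∈ s :=
          (hfib i _ h2).1 h1
        rwa [helim h] at hmem2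
      have hsub2 : ∀ i, s ∩ cylR α (ψf i) ⊆ cylL β (θ₂ i) ∩ cylR α (ψf i) := by
        intro i h hh
        obtain ⟨h1, h2⟩ := hh
        refine ⟨?_, h2⟩
        refine (hfib i _ h2).2 ?_
        show Sum.elim (fun a => h (Sum.inl a)) (fun b => h (Sum.inr b)) ∈ s
        rw [helim h]
        exact h1
      constructor
      · rw [hWs]
        refine Finset.sum_le_sum fun i _ => ?_
        rw [← rect_value μ ν hν ω hω W hWag ν' hν'ag (hθ₁D i) (hψD i)]
        exact g_mono halg W.additive W.nonneg
          (Set.Definable.inter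
            (Set.Definable.mono (cylL_definable (hθ₁D i)) (Set.subset_univ _))
            (cylR_definable (hψD i)))
          (hmem i) (hsub1 i)
      · rw [hWs]
        refine Finset.sum_le_sum fun i _ => ?_
        rw [← rect_value μ ν hν ω hω W hWag ν' hν'ag (hθ₂D i) (hψD i)]
        exact g_mono halg W.additive W.nonneg (hmem i)
          (Set.Definable.inter
            (Set.Definable.mono (cylL_definable (hθ₂D i)) (Set.subset_univ _))
            (cylR_definable (hψD i)))
          (hsub2 i)
    have hbound : ∀ ε : ℝ, 0 < ε → |W₁.val s - W₂.val s| ≤ ε := by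
      intro ε hε
      obtain ⟨n, ψf, θ₁, θ₂, hψD, hθ₁D, hθ₂D, hdisj, hcover, hfib, hgap⟩ :=
        approx_partition hMon hMne hMsmall μ hμ hs hε
      obtain ⟨hlo₁, hup₁⟩ := hsandwich W₁ hag₁ n ψf θ₁ θ₂ hψD hθ₁D hθ₂D hdisj hcover hfib
      obtain ⟨hlo₂, hup₂⟩ := hsandwich W₂ hag₂ n ψf θ₁ θ₂ hψD hθ₁D hθ₂D hdisj hcover hfib
      have hν'nonneg : ∀ i, 0 ≤ ν'.val (ψf i) := fun i => ν'.nonneg _ (hψD i)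
      have hwidth : (∑ i, μ.val (θ₂ i) * ν'.val (ψf i))
          - (∑ i, μ.val (θ₁ i) * ν'.val (ψf i)) ≤ ε := by
        rw [← Finset.sum_sub_distrib]
        have hsum1 : ∑ i, ν'.val (ψf i) = 1 := by
          have hgs := g_sum (dset_boolalg (L := L) (Set.univ : Set U) β) ν'.additive
            Finset.univ ψf (fun i _ => hψD i) (fun i _ j _ hne => hdisj i j hne)
          have hcv : (⋃ i ∈ (Finset.univ : Finset (Fin n)), ψf i) = Set.univ := by
            rw [← hcover]; ext x; simp
          rw [hcv, ν'.isProb] at hgs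
          exact hgs.symm
        calc ∑ i, (μ.val (θ₂ i) * ν'.val (ψf i) - μ.val (θ₁ i) * ν'.val (ψf i))
            = ∑ i, (μ.val (θ₂ i) - μ.val (θ₁ i)) * ν'.val (ψf i) :=
              Finset.sum_congr rfl fun i _ => by ring
          _ ≤ ∑ i, ε * ν'.val (ψf i) := Finset.sum_le_sum fun i _ =>
              mul_le_mul_of_nonneg_right (le_of_lt (hgap i)) (hν'nonneg i)
          _ = ε * ∑ i, ν'.val (ψf i) := by rw [Finset.mul_sum]
          _ = ε := by rw [hsum1, mul_one]
      rw [abs_sub_le_iff]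
      constructor <;> linarith
    have habs : W₁.val s - W₂.val s = 0 := by
      by_contra h
      have hpos : 0 < |W₁.val s - W₂.val s| := abs_pos.mpr h
      have := hbound (|W₁.val s - W₂.val s| / 2) (by linarith)
      linarith
    linarith

end KeislerPaper
end

section
/- Let ℬ be a finite Boolean algebra of first-order formulas in the variables xy (with parameters, formulas taken up to logical equivalence). Then there exists a finite Boolean algebra 𝒞 of formulas containing ℬ such that 𝒞 is closed under ∃y: for every φ(x,y) ∈ 𝒞, the formula (∃y)φ(x,y) belongs to 𝒞 (up to logical equivalence). -/
namespace KeislerPaper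

open FirstOrder FirstOrder.Language Set MeasureTheory
open scoped ENNReal Classical

universe u v

/-! ### Auxiliary machinery for Statement 9 -/

section Statement9Aux

/-- Realization of a formula only depends on the values of the valuation on the free
variables. -/
lemma realize_congr_freeVars {L' : FirstOrder.Language.{u, u}} {U : Type u} [L'.Structure U]
    {γ : Type u} [DecidableEq γ] (φ : L'.Formula γ) {v w : γ → U}
    (h : ∀ x ∈ φ.freeVarFinset, v x = w x) : φ.Realize v ↔ φ.Realize w := by
  have hsub : ↑φ.freeVarFinset ⊆ (↑φ.freeVarFinset : Set γ) := subset_rfl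
  have h1 := BoundedFormula.realize_restrictFreeVar' (φ := φ) hsub (v := v)
    (xs := (default : Fin 0 → U))
  have h2 := BoundedFormula.realize_restrictFreeVar' (φ := φ) hsub (v := w)
    (xs := (default : Fin 0 → U))
  have hvw : (v ∘ (↑) : (↑φ.freeVarFinset : Set γ) → U) = w ∘ (↑) := by
    funext x
    exact h x.1 (by exact_mod_cast x.2)
  refine Iff.trans h1.symm (Iff.trans ?_ h2)
  rw [hvw]

/-- Definable sets are closed under the operation `exY` (quantification over the second
block of variables). -/
lemma definable_exY {L : FirstOrder.Language.{u, u}} {U : Type u} [L.Structure U]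
    {α β : Type u} {s : Set ((α ⊕ β) → U)} (h : (Set.univ : Set U).Definable L s) :
    (Set.univ : Set U).Definable L (exY s) := by
  classical
  obtain ⟨φ, rfl⟩ := h
  set Fb : Finset β := φ.freeVarFinset.preimage Sum.inr Sum.inr_injective.injOn with hFb
  let f : (α ⊕ β) → (α ⊕ β) ⊕ (↑Fb : Type u) := fun x =>
    Sum.elim (fun a => Sum.inl (Sum.inl a))
      (fun b => if hb : b ∈ Fb then Sum.inr (⟨b, hb⟩ : ↑Fb) else Sum.inl (Sum.inr b)) x
  refine ⟨Formula.iExs (↑Fb : Type u) (φ.relabel f), ?_⟩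
  ext g
  simp only [exY, Set.mem_setOf_eq, Formula.realize_iExs, Formula.realize_relabel]
  constructor
  · rintro ⟨b, hb⟩
    refine ⟨fun y => b y.1, ?_⟩
    refine (realize_congr_freeVars φ (v := Sum.elim (fun a => g (Sum.inl a)) b) ?_).mp hb
    intro x hx
    rcases x with a | y
    · rfl
    · have hy : y ∈ Fb := Finset.mem_preimage.mpr hx
      simp only [f, Function.comp_apply, Sum.elim_inl, Sum.elim_inr, hy, dif_pos]
  · rintro ⟨i, hi⟩
    refine ⟨fun y => if hy : y ∈ Fb then i ⟨y, hy⟩ else g (Sum.inr y), ?_⟩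
    refine (realize_congr_freeVars φ (w := fun x => Sum.elim g i (f x)) ?_).mpr hi
    intro x _
    rcases x with a | y
    · rfl
    · by_cases hy : y ∈ Fb <;>
        simp only [f, Sum.elim_inl, Sum.elim_inr, hy, dif_pos, dif_neg, not_false_iff]

/-- The cell of the family `G` with sign pattern `σ`. -/
def cellF {X : Type u} {ι : Type u} (G : ι → Set X) (σ : ι → Bool) : Set X :=
  ⋂ i, cond (σ i) (G i) (G i)ᶜ

/-- The sign pattern of a point with respect to the family `G`. -/
noncomputable def sigF {X : Type u} {ι : Type u} (G : ι → Set X) (x : X) : ι → Bool :=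
  fun i => decide (x ∈ G i)

/-- The finite Boolean algebra generated by the finite family `G`: all finite unions of
its cells. -/
def genAlg {X : Type u} {ι : Type u} (G : ι → Set X) : Set (Set X) :=
  Set.range fun T : Finset (ι → Bool) => ⋃ σ ∈ T, cellF G σ

variable {X : Type u} {ι : Type u} {G : ι → Set X}

lemma mem_cellF {σ : ι → Bool} {x : X} :
    x ∈ cellF G σ ↔ ∀ i, (x ∈ G i ↔ σ i = true) := by
  simp only [cellF, Set.mem_iInter]
  refine forall_congr' fun i => ?_
  cases h : σ i <;> simp

lemma mem_cellF_sigF {x : X} : x ∈ cellF G (sigF G x) :=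
  mem_cellF.mpr fun i => by simp [sigF]

lemma eq_sigF_of_mem {σ : ι → Bool} {x : X} (hx : x ∈ cellF G σ) : σ = sigF G x := by
  funext i
  have h1 := mem_cellF.mp hx i
  by_cases h : x ∈ G i
  · have : σ i = true := h1.mp h
    simp [this, sigF, h]
  · have : σ i = false := by
      cases hσ : σ i
      · rfl
      · exact absurd (h1.mpr hσ) h
    simp [this, sigF, h]

lemma mem_biUnion_cellF {p : (ι → Bool) → Prop} {x : X} :
    x ∈ (⋃ σ, ⋃ (_ : p σ), cellF G σ) ↔ p (sigF G x) := by
  simp only [Set.mem_iUnion, exists_prop]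
  constructor
  · rintro ⟨σ, hσT, hx⟩
    exact (eq_sigF_of_mem hx) ▸ hσT
  · intro h
    exact ⟨_, h, mem_cellF_sigF⟩

lemma univ_mem_genAlg [Fintype ι] : Set.univ ∈ genAlg G := by
  classical
  refine ⟨Finset.univ, ?_⟩
  ext x
  simp only [mem_biUnion_cellF, Finset.mem_univ, Set.mem_univ]

lemma empty_mem_genAlg : (∅ : Set X) ∈ genAlg G := by
  refine ⟨∅, ?_⟩
  ext x
  simp only [mem_biUnion_cellF, Finset.notMem_empty, Set.mem_empty_iff_false]

lemma compl_mem_genAlg [Fintype ι] {s : Set X} (h : s ∈ genAlg G) : sᶜ ∈ genAlg G := by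
  classical
  obtain ⟨T, rfl⟩ := h
  refine ⟨Finset.univ \ T, ?_⟩
  ext x
  simp only [mem_biUnion_cellF, Finset.mem_sdiff, Finset.mem_univ, true_and,
    Set.mem_compl_iff]

lemma inter_mem_genAlg {s t : Set X} (hs : s ∈ genAlg G) (ht : t ∈ genAlg G) :
    s ∩ t ∈ genAlg G := by
  classical
  obtain ⟨T, rfl⟩ := hs
  obtain ⟨T', rfl⟩ := ht
  refine ⟨T ∩ T', ?_⟩
  ext x
  simp only [mem_biUnion_cellF, Finset.mem_inter, Set.mem_inter_iff]

lemma union_mem_genAlg {s t : Set X} (hs : s ∈ genAlg G) (ht : t ∈ genAlg G) :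
    s ∪ t ∈ genAlg G := by
  classical
  obtain ⟨T, rfl⟩ := hs
  obtain ⟨T', rfl⟩ := ht
  refine ⟨T ∪ T', ?_⟩
  ext x
  simp only [mem_biUnion_cellF, Finset.mem_union, Set.mem_union]

lemma generator_mem_genAlg [Fintype ι] (i : ι) : G i ∈ genAlg G := by
  classical
  refine ⟨Finset.univ.filter (fun σ => σ i = true), ?_⟩
  ext x
  simp only [mem_biUnion_cellF, Finset.mem_filter, Finset.mem_univ, true_and, sigF,
    decide_eq_true_eq]

/-- A collection of sets containing `univ` and closed under binary intersections is
closed under intersections over a finite index type. -/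
lemma iInter_mem_of {ι' : Type u} [Fintype ι'] {D : Set (Set X)} (huniv : Set.univ ∈ D)
    (hinter : ∀ s ∈ D, ∀ t ∈ D, s ∩ t ∈ D) {f : ι' → Set X} (hf : ∀ i, f i ∈ D) :
    (⋂ i, f i) ∈ D := by
  classical
  have key : ∀ t : Finset ι', (⋂ i ∈ t, f i) ∈ D := by
    intro t
    refine Finset.induction_on t (by simpa using huniv) ?_
    intro a s _ ih
    rw [Finset.set_biInter_insert]
    exact hinter _ (hf a) _ ih
  have := key Finset.univ
  simpa using this

/-- A collection of sets containing `∅` and closed under binary unions is closed under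
unions over a finite set of indices. -/
lemma biUnion_mem_of {γ : Type u} {D : Set (Set X)} (hemp : (∅ : Set X) ∈ D)
    (hunion : ∀ s ∈ D, ∀ t ∈ D, s ∪ t ∈ D) (T : Finset γ) {f : γ → Set X}
    (hf : ∀ σ ∈ T, f σ ∈ D) : (⋃ σ ∈ T, f σ) ∈ D := by
  classical
  induction T using Finset.induction_on with
  | empty => simpa using hemp
  | insert _ _ hna ih =>
    rw [Finset.set_biUnion_insert]
    exact hunion _ (hf _ (Finset.mem_insert_self _ _))
      _ (ih fun σ hσ => hf σ (Finset.mem_insert_of_mem hσ))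

/-- A set of tuples is `y`-independent when membership only depends on the `x`-block of
coordinates. -/
def InvY {U α β : Type u} (s : Set ((α ⊕ β) → U)) : Prop :=
  ∀ h₁ h₂ : (α ⊕ β) → U, (∀ a, h₁ (Sum.inl a) = h₂ (Sum.inl a)) → (h₁ ∈ s ↔ h₂ ∈ s)

lemma invY_exY {U α β : Type u} (s : Set ((α ⊕ β) → U)) : InvY (exY s) := by
  intro h₁ h₂ hh
  have e : (fun a => h₁ (Sum.inl a)) = fun a => h₂ (Sum.inl a) := funext hh
  simp only [exY, Set.mem_setOf_eq, e]

lemma invY_compl {U α β : Type u} {s : Set ((α ⊕ β) → U)} (hs : InvY s) : InvY sᶜ :=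
  fun h₁ h₂ hh => not_congr (hs h₁ h₂ hh)

lemma invY_iInter {U α β ι' : Type u} {f : ι' → Set ((α ⊕ β) → U)}
    (hf : ∀ i, InvY (f i)) : InvY (⋂ i, f i) := by
  intro h₁ h₂ hh
  simp only [Set.mem_iInter]
  exact forall_congr' fun i => hf i h₁ h₂ hh

lemma exY_inter_of_invY {U α β : Type u} {a e : Set ((α ⊕ β) → U)} (he : InvY e) :
    exY (a ∩ e) = exY a ∩ e := by
  ext h
  simp only [exY, Set.mem_setOf_eq, Set.mem_inter_iff]
  constructor
  · rintro ⟨b, hba, hbe⟩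
    exact ⟨⟨b, hba⟩, (he (Sum.elim (fun a => h (Sum.inl a)) b) h (fun _ => rfl)).mp hbe⟩
  · rintro ⟨⟨b, hba⟩, hhe⟩
    exact ⟨b, hba, (he (Sum.elim (fun a => h (Sum.inl a)) b) h (fun _ => rfl)).mpr hhe⟩

lemma exY_biUnion {U α β γ : Type u} (T : Finset γ) (f : γ → Set ((α ⊕ β) → U)) :
    exY (⋃ σ ∈ T, f σ) = ⋃ σ ∈ T, exY (f σ) := by
  ext h
  simp only [exY, Set.mem_setOf_eq, Set.mem_iUnion, exists_prop]
  constructor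
  · rintro ⟨b, σ, hσ, hb⟩
    exact ⟨σ, hσ, b, hb⟩
  · rintro ⟨σ, hσ, b, hb⟩
    exact ⟨b, σ, hσ, hb⟩

end Statement9Aux

/-- Every finite Boolean algebra of formulas in the variables `xy`
(with parameters, identified with the corresponding algebra of definable sets) is
contained in a finite Boolean algebra of formulas closed under `∃ y`. -/
theorem statement_9
    (L : FirstOrder.Language.{u, u}) (U : Type u) [L.Structure U]
    (α β : Type u) (B : Set (Set ((α ⊕ β) → U)))
    (hfin : B.Finite) (hdef : ∀ s ∈ B, (Set.univ : Set U).Definable L s)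
    (halg : IsBoolAlg B) :
    ∃ C : Set (Set ((α ⊕ β) → U)), B ⊆ C ∧ C.Finite ∧
      (∀ s ∈ C, (Set.univ : Set U).Definable L s) ∧ IsBoolAlg C ∧
      ∀ s ∈ C, exY s ∈ C := by
  classical
  haveI : Fintype B := hfin.fintype
  set G : (↑B ⊕ ↑B : Type u) → Set ((α ⊕ β) → U) :=
    Sum.elim (fun s => (s : Set ((α ⊕ β) → U))) (fun s => exY (s : Set ((α ⊕ β) → U)))
    with hG
  have hGdef : ∀ i, (Set.univ : Set U).Definable L (G i) := by
    rintro (s | s)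
    · exact hdef s s.2
    · exact definable_exY (hdef s s.2)
  refine ⟨genAlg G, ?_, ?_, ?_, ?_, ?_⟩
  · -- B ⊆ genAlg G
    intro s hs
    exact generator_mem_genAlg (G := G) (Sum.inl ⟨s, hs⟩)
  · -- finiteness
    exact Set.finite_range _
  · -- definability
    rintro s ⟨T, rfl⟩
    refine definable_biUnion_finset (fun σ => ?_) T
    refine iInter_mem_of (D := {s | (Set.univ : Set U).Definable L s}) definable_univ
      (fun s hs t ht => Set.Definable.inter hs ht) (fun i => ?_)
    cases h : σ i
    · exact (hGdef i).compl
    · exact hGdef i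
  · -- Boolean algebra
    exact ⟨univ_mem_genAlg, fun s hs => compl_mem_genAlg hs,
      fun s hs t ht => inter_mem_genAlg hs ht⟩
  · -- closure under exY
    rintro s ⟨T, rfl⟩
    rw [exY_biUnion]
    refine biUnion_mem_of empty_mem_genAlg
      (fun s hs t ht => union_mem_genAlg hs ht) T (fun σ _ => ?_)
    set a : Set ((α ⊕ β) → U) :=
      ⋂ s : ↑B, cond (σ (Sum.inl s)) (s : Set ((α ⊕ β) → U)) ((s : Set ((α ⊕ β) → U)))ᶜ
      with ha_def
    set e : Set ((α ⊕ β) → U) :=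
      ⋂ s : ↑B, cond (σ (Sum.inr s)) (exY (s : Set ((α ⊕ β) → U)))
        (exY (s : Set ((α ⊕ β) → U)))ᶜ with he_def
    have hcell : cellF G σ = a ∩ e := Set.iInter_sum
    have haB : a ∈ B := by
      refine iInter_mem_of halg.1 halg.2.2 (fun s => ?_)
      cases h : σ (Sum.inl s)
      · exact halg.2.1 _ s.2
      · exact s.2
    have hei : InvY e := by
      refine invY_iInter (fun s => ?_)
      cases h : σ (Sum.inr s)
      · exact invY_compl (invY_exY _)
      · exact invY_exY _
    have hee : e ∈ genAlg G := by
      refine iInter_mem_of univ_mem_genAlg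
        (fun s hs t ht => inter_mem_genAlg hs ht) (fun s => ?_)
      cases h : σ (Sum.inr s)
      · exact compl_mem_genAlg (generator_mem_genAlg (G := G) (Sum.inr s))
      · exact generator_mem_genAlg (G := G) (Sum.inr s)
    rw [hcell, exY_inter_of_invY hei]
    have hexa : exY a = G (Sum.inr ⟨a, haB⟩) := rfl
    exact inter_mem_genAlg (hexa ▸ generator_mem_genAlg (G := G) (Sum.inr ⟨a, haB⟩)) hee

end KeislerPaper
end
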